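/- arXiv:1703.08887 — 4 statements merged into one kernel-verified Lean document; each statement's English description precedes it below -/
import Mathlib

section
/- Mean comparison inequality: Under the Banach-space product setting with a twice Fréchet differentiable functional f satisfying ‖f_{ii}(x)‖ ≤ c_{ii} on W and diameter bound M on each W_i, for every product probability measure ν = ν_1×…×ν_n supported on W one has ∫_W ( f(x) − f(m(ν)) ) dν(x) ≥ −(M²/2) Σ_{i=1}^n c_{ii}. -/
open MeasureTheory Real

/-- The `i`-th coordinate inclusion as a continuous linear map. -/
noncomputable def coordL {n : ℕ} (V : Fin n → Type*) [∀ i, NormedAddCommGroup (V i)]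
    [∀ i, NormedSpace ℝ (V i)] (i : Fin n) : V i →L[ℝ] (∀ j, V j) :=
  { LinearMap.single ℝ V i with cont := continuous_single i }

/-- Partial Fréchet differential `f_i(x) : V_i → ℝ`. -/
noncomputable def partialD {n : ℕ} {V : Fin n → Type*} [∀ i, NormedAddCommGroup (V i)]
    [∀ i, NormedSpace ℝ (V i)] (f : (∀ j, V j) → ℝ) (x : ∀ j, V j) (i : Fin n) :
    V i →L[ℝ] ℝ :=
  (fderiv ℝ f x).comp (coordL V i)

private lemma taylor_lb {g g₁ g₂ : ℝ → ℝ} {K : ℝ}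
    (hg : ∀ t, HasDerivAt g (g₁ t) t)
    (hg₁ : ∀ t, HasDerivAt g₁ (g₂ t) t)
    (hK : ∀ t ∈ Set.Icc (0:ℝ) 1, |g₂ t| ≤ K) :
    g 1 - g 0 ≥ g₁ 0 - K / 2 := by
  have key : ∀ t ∈ Set.Icc (0:ℝ) 1, g₁ 0 - K * t ≤ g₁ t := by
    have hψ : MonotoneOn (fun t => g₁ t + K * t) (Set.Icc 0 1) := by
      apply monotoneOn_of_deriv_nonneg (convex_Icc 0 1)
      · exact (continuous_iff_continuousAt.2 fun t =>
          ((hg₁ t).add ((hasDerivAt_id t).const_mul K)).continuousAt).continuousOn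
      · intro t _
        exact ((hg₁ t).add ((hasDerivAt_id t).const_mul K)).differentiableAt.differentiableWithinAt
      · intro t ht
        rw [interior_Icc] at ht
        have hd : HasDerivAt (fun t => g₁ t + K * t) (g₂ t + K * 1) t :=
          (hg₁ t).add ((hasDerivAt_id t).const_mul K)
        rw [hd.deriv]
        have := (abs_le.1 (hK t ⟨ht.1.le, ht.2.le⟩)).1
        linarith
    intro t ht
    have h0 : (0:ℝ) ∈ Set.Icc (0:ℝ) 1 := Set.left_mem_Icc.2 zero_le_one
    have := hψ h0 ht ht.1
    simp only [mul_zero, add_zero] at this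
    linarith
  have hφ : MonotoneOn (fun t => g t - t * g₁ 0 + K * (t ^ 2 / 2)) (Set.Icc 0 1) := by
    have hder : ∀ t : ℝ, HasDerivAt (fun t => g t - t * g₁ 0 + K * (t ^ 2 / 2))
        (g₁ t - g₁ 0 + K * t) t := by
      intro t
      have h1 : HasDerivAt (fun t : ℝ => t * g₁ 0) (g₁ 0) t := by
        simpa using (hasDerivAt_id t).mul_const (g₁ 0)
      have h2 : HasDerivAt (fun t : ℝ => K * (t ^ 2 / 2)) (K * t) t := by
        have := ((hasDerivAt_pow 2 t).div_const 2).const_mul K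
        simpa using this.congr_deriv (by ring)
      exact ((hg t).sub h1).add h2
    apply monotoneOn_of_deriv_nonneg (convex_Icc 0 1)
    · exact (continuous_iff_continuousAt.2 fun t => (hder t).continuousAt).continuousOn
    · exact fun t _ => (hder t).differentiableAt.differentiableWithinAt
    · intro t ht
      rw [interior_Icc] at ht
      rw [(hder t).deriv]
      have := key t ⟨ht.1.le, ht.2.le⟩
      linarith
  have h0 : (0:ℝ) ∈ Set.Icc (0:ℝ) 1 := Set.left_mem_Icc.2 zero_le_one
  have h1 : (1:ℝ) ∈ Set.Icc (0:ℝ) 1 := Set.right_mem_Icc.2 zero_le_one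
  have := hφ h0 h1 zero_le_one
  simp only [one_pow, zero_pow, mul_zero, add_zero, sub_zero, zero_mul, mul_one, one_mul] at this
  norm_num at this
  linarith

private lemma pointwise_taylor {n : ℕ} {V : Fin n → Type*} [∀ i, NormedAddCommGroup (V i)]
    [∀ i, NormedSpace ℝ (V i)]
    {f : (∀ j, V j) → ℝ} (hf1 : Differentiable ℝ f) (hf2 : Differentiable ℝ (fderiv ℝ f))
    {K : ℝ} {y : ∀ j, V j} {i : Fin n} {δ : V i}
    (hK : ∀ t ∈ Set.Icc (0:ℝ) 1,
      |fderiv ℝ (fun x => fderiv ℝ f x (Pi.single i δ)) (y + t • Pi.single i δ)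
        (Pi.single i δ)| ≤ K) :
    f (y + Pi.single i δ) - f y ≥ fderiv ℝ f y (Pi.single i δ) - K / 2 := by
  set v := Pi.single i δ with hv
  set p : ℝ → (∀ j, V j) := fun t => y + t • v with hp
  have hpd : ∀ t : ℝ, HasDerivAt p v t := fun t => by
    have h := ((hasDerivAt_id t).smul_const v).const_add y
    rw [one_smul] at h
    exact h
  have hg : ∀ t, HasDerivAt (fun t => f (p t)) (fderiv ℝ f (p t) v) t := fun t =>
    (hf1 (p t)).hasFDerivAt.comp_hasDerivAt t (hpd t)
  have hdiff : Differentiable ℝ fun x => fderiv ℝ f x v := hf2.clm_apply (differentiable_const v)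
  have hg₁ : ∀ t, HasDerivAt (fun t => fderiv ℝ f (p t) v)
      (fderiv ℝ (fun x => fderiv ℝ f x v) (p t) v) t := fun t =>
    (hdiff (p t)).hasFDerivAt.comp_hasDerivAt t (hpd t)
  have := taylor_lb hg hg₁ (fun t ht => hK t ht)
  have hp0 : p 0 = y := by simp [hp]
  have hp1 : p 1 = y + v := by simp [hp]
  rw [hp0, hp1] at this
  exact this

private lemma integral_indep_zero {n : ℕ} {α : Fin (n + 1) → Type*}
    [∀ j, MeasurableSpace (α j)]
    (μ : ∀ j, Measure (α j)) [∀ j, IsProbabilityMeasure (μ j)] (i : Fin (n + 1))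
    {E : Type*} [NormedAddCommGroup E] [NormedSpace ℝ E] [CompleteSpace E]
    (T : (∀ j, α (i.succAbove j)) → (E →L[ℝ] ℝ)) (φ : α i → E)
    (hD : Integrable (fun w => T (i.removeNth w) (φ (w i))) (Measure.pi μ))
    (hφ : Integrable φ (μ i)) (hφ0 : ∫ a, φ a ∂(μ i) = 0) :
    ∫ w, T (i.removeNth w) (φ (w i)) ∂(Measure.pi μ) = 0 := by
  have hmp := measurePreserving_piFinSuccAbove μ i
  set e := MeasurableEquiv.piFinSuccAbove α i with he
  have h1 := hmp.integral_comp' (f := e) (fun p => T p.2 (φ p.1))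
  simp only [he, MeasurableEquiv.piFinSuccAbove_apply, Fin.insertNthEquiv_symm_apply] at h1
  rw [h1]
  have hInt2 : Integrable (fun p : α i × (∀ j, α (i.succAbove j)) => T p.2 (φ p.1))
      ((μ i).prod (Measure.pi fun j => μ (i.succAbove j))) := by
    rw [← hmp.map_eq]
    rw [integrable_map_equiv]
    have : ((fun p : α i × (∀ j, α (i.succAbove j)) => T p.2 (φ p.1)) ∘ e)
        = fun w => T (i.removeNth w) (φ (w i)) := rfl
    rw [this]
    exact hD
  rw [MeasureTheory.integral_prod_symm _ hInt2]
  have hzero : ∀ r, ∫ a, T r (φ a) ∂(μ i) = 0 := fun r => by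
    rw [ContinuousLinearMap.integral_comp_comm _ hφ, hφ0, map_zero]
  have : (fun r => ∫ a, ((fun p : α i × (∀ j, α (i.succAbove j)) => T p.2 (φ p.1)) (a, r))
      ∂(μ i)) = fun _ => (0 : ℝ) := funext fun r => hzero r
  rw [this, integral_zero]

/-- **Mean comparison inequality.** For a twice Fréchet differentiable `f` with
`‖f_{ii}(x)‖ ≤ c_{ii}` on `W = W_1 × ⋯ × W_n` and diameter bound `M` on each `W i`,
for every product probability measure `ν` supported on `W`,
`∫ (f(x) - f(m(ν))) dν(x) ≥ -(M²/2) ∑ c_{ii}`. -/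
theorem mean_comparison
    {n : ℕ} {V : Fin n → Type*}
    [∀ i, NormedAddCommGroup (V i)] [∀ i, NormedSpace ℝ (V i)]
    [∀ i, CompleteSpace (V i)] [∀ i, MeasurableSpace (V i)] [∀ i, BorelSpace (V i)]
    (W : ∀ i, Set (V i))
    (hWc : ∀ i, IsCompact (W i)) (hWconv : ∀ i, Convex ℝ (W i))
    (f : (∀ j, V j) → ℝ)
    (hf1 : Differentiable ℝ f) (hf2 : Differentiable ℝ (fderiv ℝ f))
    (c : Fin n → Fin n → ℝ) (hc_pos : ∀ i j, 0 < c i j)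
    (hc : ∀ x ∈ Set.univ.pi W, ∀ (i j : Fin n) (zi : V i) (rj : V j),
      |fderiv ℝ (fun y => fderiv ℝ f y (Pi.single i zi)) x (Pi.single j rj)|
        ≤ c i j * ‖zi‖ * ‖rj‖)
    (M : ℝ) (hM : 0 < M)
    (hMW : ∀ i, ∀ z ∈ W i, ∀ z' ∈ W i, ‖z - z'‖ ≤ M)
    (ν : ∀ i, Measure (V i)) [∀ i, IsProbabilityMeasure (ν i)]
    (hνW : ∀ i, ν i (W i) = 1) :
    ∫ x, (f x - f (fun i => ∫ z, z ∂(ν i))) ∂(Measure.pi ν) ≥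
      -(M ^ 2 / 2) * ∑ i, c i i := by
  classical
  set m : ∀ j, V j := fun j => ∫ z, z ∂(ν j) with hm
  rcases Nat.eq_zero_or_pos n with hn | hn
  · subst hn
    have hx : (fun x : ∀ j, V j => f x - f m) = fun _ => (0 : ℝ) :=
      funext fun x => by rw [Subsingleton.elim m x]; ring
    rw [hx, integral_zero]
    simp
  obtain ⟨n', rfl⟩ : ∃ n', n = n' + 1 := ⟨n - 1, (Nat.succ_pred_eq_of_pos hn).symm⟩
  -- basic measurability facts
  have hWm : ∀ j, MeasurableSet (W j) := fun j => (hWc j).isClosed.measurableSet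
  have hν_ae : ∀ j, ∀ᵐ z ∂(ν j), z ∈ W j := by
    intro j
    have hcompl : ν j (W j)ᶜ = 0 := by
      have h := measure_compl (hWm j) (measure_ne_top (ν j) _)
      rw [hνW j, measure_univ] at h
      simpa using h
    exact (ae_iff.2 hcompl)
  -- the subtype measures
  set μ : ∀ j, Measure (W j) := fun j => (ν j).comap Subtype.val with hμdef
  have hemb : ∀ j, MeasurableEmbedding ((↑) : W j → V j) := fun j =>
    MeasurableEmbedding.subtype_coe (hWm j)
  have hmap : ∀ j, MeasurePreserving ((↑) : W j → V j) (μ j) (ν j) := by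
    intro j
    refine ⟨measurable_subtype_coe, ?_⟩
    rw [hμdef]
    rw [map_comap_subtype_coe (hWm j)]
    exact Measure.restrict_eq_self_of_ae_mem (hν_ae j)
  haveI hμprob : ∀ j, IsProbabilityMeasure (μ j) := by
    intro j
    constructor
    rw [hμdef]
    rw [(hemb j).comap_apply]
    simp [Subtype.range_coe, hνW j]
  -- topology instances on the subtypes
  haveI hcs : ∀ j, CompactSpace (W j) := fun j => isCompact_iff_compactSpace.mp (hWc j)
  haveI hsc : ∀ j, SecondCountableTopology (W j) := fun j => inferInstance
  -- the inclusion map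
  set ι : (∀ j, W j) → (∀ j, V j) := fun w j => (w j : V j) with hι
  have hιmp : MeasurePreserving ι (Measure.pi μ) (Measure.pi ν) :=
    measurePreserving_pi μ ν hmap
  have hpiWm : MeasurableSet (Set.univ.pi W) := MeasurableSet.univ_pi hWm
  let e₀ : (∀ j, W j) ≃ᵐ (Set.univ.pi W : Set (∀ j, V j)) :=
    { toFun := fun w => ⟨fun j => (w j : V j), fun j _ => (w j).2⟩
      invFun := fun x j => ⟨x.1 j, x.2 j trivial⟩
      left_inv := fun w => funext fun j => Subtype.ext rfl
      right_inv := fun x => Subtype.ext rfl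
      measurable_toFun := by
        apply Measurable.subtype_mk
        exact measurable_pi_iff.2 fun j =>
          measurable_subtype_coe.comp (measurable_pi_apply j)
      measurable_invFun := by
        apply measurable_pi_iff.2
        intro j
        exact ((measurable_pi_apply j).comp measurable_subtype_coe).subtype_mk }
  have hιemb : MeasurableEmbedding ι :=
    (MeasurableEmbedding.subtype_coe hpiWm).comp e₀.measurableEmbedding
  -- transfer the integral to the subtype side
  have htrans : ∫ x, (f x - f m) ∂(Measure.pi ν) =
      ∫ w, (f (ι w) - f m) ∂(Measure.pi μ) := by
    rw [← hιmp.map_eq, hιemb.integral_map]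
  rw [htrans]
  -- integral of coordinates
  have hz₀ : ∀ j, (W j).Nonempty := fun j =>
    nonempty_of_measure_ne_zero (by rw [hνW j]; exact one_ne_zero)
  have hvalint : ∀ j, Integrable (fun w : W j => (w : V j)) (μ j) := by
    intro j
    obtain ⟨z₀, hz₀j⟩ := hz₀ j
    refine (integrable_const (M + ‖z₀‖)).mono' continuous_subtype_val.aestronglyMeasurable
      (ae_of_all _ fun w => ?_)
    calc ‖(w : V j)‖ = ‖((w : V j) - z₀) + z₀‖ := by rw [sub_add_cancel]
      _ ≤ ‖(w : V j) - z₀‖ + ‖z₀‖ := norm_add_le _ _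
      _ ≤ M + ‖z₀‖ := by
          have := hMW j _ w.2 _ hz₀j
          linarith
  have hmval : ∀ j, ∫ w, (w : V j) ∂(μ j) = m j := by
    intro j
    have h0 : m j = ∫ z, z ∂(ν j) := rfl
    rw [h0, ← (hmap j).map_eq, (hemb j).integral_map]
  have hmem : ∀ j, m j ∈ W j := by
    intro j
    rw [← hmval j]
    exact (hWconv j).integral_mem (hWc j).isClosed (ae_of_all _ fun w => w.2) (hvalint j)
  -- the hybrid vectors
  set Y : ℕ → (∀ j, W j) → (∀ j, V j) :=
    fun k w j => if (j : ℕ) < k then (w j : V j) else m j with hY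
  have hY0 : ∀ w, Y 0 w = m := fun w => funext fun j => if_neg (Nat.not_lt_zero _)
  have hYtop : ∀ w, Y (n' + 1) w = ι w := fun w => funext fun j => if_pos j.isLt
  have hYmem : ∀ k w, Y k w ∈ Set.univ.pi W := by
    intro k w j _
    by_cases h : (j : ℕ) < k
    · simpa [hY, h] using (w j).2
    · simpa [hY, h] using hmem j
  have hYcont : ∀ k, Continuous (Y k) := by
    intro k
    apply continuous_pi
    intro j
    by_cases h : (j : ℕ) < k
    · simpa [hY, h, Function.comp_def] using (continuous_subtype_val.comp (continuous_apply j))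
    · simpa [hY, h] using continuous_const
  have hfc : Continuous f := hf1.continuous
  -- integrability of continuous functions
  have hint : ∀ g : (∀ j, W j) → ℝ, Continuous g → Integrable g (Measure.pi μ) := by
    intro g hg
    obtain ⟨C, hC⟩ := isCompact_univ.exists_bound_of_continuousOn hg.continuousOn
    exact (integrable_const C).mono' hg.aestronglyMeasurable
      (ae_of_all _ fun w => hC w trivial)
  have hFint : ∀ k, Integrable (fun w => f (Y k w)) (Measure.pi μ) := fun k =>
    hint _ (hfc.comp (hYcont k))
  -- the per-coordinate estimate
  have coordL_apply : ∀ (i : Fin (n' + 1)) (z : V i), coordL V i z = Pi.single i z :=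
    fun i z => rfl
  have key : ∀ i : Fin (n' + 1),
      ∫ w, (f (Y ((i : ℕ) + 1) w) - f (Y (i : ℕ) w)) ∂(Measure.pi μ) ≥
        -(M ^ 2 / 2) * c i i := by
    intro i
    set δ : (∀ j, W j) → V i := fun w => (w i : V i) - m i with hδ
    have hδM : ∀ w, ‖δ w‖ ≤ M := fun w => hMW i _ (w i).2 _ (hmem i)
    set D : (∀ j, W j) → ℝ :=
      fun w => fderiv ℝ f (Y (i : ℕ) w) (Pi.single i (δ w)) with hD
    have hupd : ∀ w, Y ((i : ℕ) + 1) w = Y (i : ℕ) w + Pi.single i (δ w) := by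
      intro w
      funext j
      by_cases hj : j = i
      · subst hj
        simp only [hY, Pi.add_apply, Nat.lt_succ_self, if_pos, lt_irrefl, if_neg,
          Pi.single_eq_same, hδ, if_false]
        module
      · have hs : Pi.single i (δ w) j = 0 := Pi.single_eq_of_ne hj _
        have hne : (j : ℕ) ≠ (i : ℕ) := fun h => hj (Fin.ext h)
        simp only [hY, Pi.add_apply, hs, add_zero]
        rcases lt_or_gt_of_ne hne with h | h
        · rw [if_pos h, if_pos (Nat.lt_succ_of_lt h)]
        · rw [if_neg (by omega), if_neg (by omega)]
    -- pointwise Taylor estimate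
    have hpt : ∀ w, D w - (c i i * M ^ 2) / 2 ≤
        f (Y ((i : ℕ) + 1) w) - f (Y (i : ℕ) w) := by
      intro w
      rw [hupd w]
      have hK : ∀ t ∈ Set.Icc (0:ℝ) 1,
          |fderiv ℝ (fun x => fderiv ℝ f x (Pi.single i (δ w)))
            (Y (i : ℕ) w + t • Pi.single i (δ w)) (Pi.single i (δ w))| ≤ c i i * M ^ 2 := by
        intro t ht
        have hmemt : (Y (i : ℕ) w + t • Pi.single i (δ w)) ∈ Set.univ.pi W := by
          intro j _
          by_cases hj : j = i
          · subst hj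
            have hval : (Y (j : ℕ) w + t • Pi.single j (δ w)) j
                = (1 - t) • m j + t • (w j : V j) := by
              simp only [Pi.add_apply, Pi.smul_apply, Pi.single_eq_same, hY, lt_irrefl,
                if_neg, hδ, if_false]
              module
            rw [hval]
            exact hWconv j (hmem j) (w j).2 (by linarith [ht.2]) ht.1 (by ring)
          · have hval : (Y (i : ℕ) w + t • Pi.single i (δ w)) j = Y (i : ℕ) w j := by
              simp [Pi.single_eq_of_ne hj]
            rw [hval]
            exact hYmem (i : ℕ) w j trivial
        have hb := hc _ hmemt i i (δ w) (δ w)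
        have h1 : c i i * ‖δ w‖ * ‖δ w‖ ≤ c i i * M ^ 2 := by
          have h2 := hδM w
          have h3 := norm_nonneg (δ w)
          have h4 := (hc_pos i i).le
          calc c i i * ‖δ w‖ * ‖δ w‖ = c i i * (‖δ w‖ * ‖δ w‖) := by ring
            _ ≤ c i i * M ^ 2 := by
                apply mul_le_mul_of_nonneg_left ?_ h4
                nlinarith
        linarith
      have htay := pointwise_taylor hf1 hf2 hK
      have hDw : D w = fderiv ℝ f (Y (i : ℕ) w) (Pi.single i (δ w)) := rfl
      rw [hDw]
      linarith
    -- integrability of D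
    have hDcont : Continuous D := by
      have h₁ : Continuous fun w => fderiv ℝ f (Y (i : ℕ) w) :=
        hf2.continuous.comp (hYcont (i : ℕ))
      have h₂ : Continuous fun w => Pi.single i (δ w) := by
        have hδc : Continuous δ :=
          (continuous_subtype_val.comp (continuous_apply i)).sub continuous_const
        have := (coordL V i).continuous.comp hδc
        exact this
      exact h₁.clm_apply h₂
    have hDint := hint D hDcont
    -- ∫ D = 0 by Fubini and the mean property
    have hDzero : ∫ w, D w ∂(Measure.pi μ) = 0 := by
      set a₀ : (W i) := (⟨m i, hmem i⟩ : W i) with ha₀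
      set T : (∀ j, W (i.succAbove j)) → (V i →L[ℝ] ℝ) :=
        fun r => (fderiv ℝ f (Y (i : ℕ) (i.insertNth a₀ r))).comp (coordL V i) with hT
      set φ : (W i) → V i := fun a => (a : V i) - m i with hφdef
      have hYind : ∀ w : ∀ j, W j,
          Y (i : ℕ) (i.insertNth a₀ (i.removeNth w)) = Y (i : ℕ) w := by
        intro w
        funext j
        rcases eq_or_ne j i with hj | hj
        · subst hj
          simp [hY, lt_irrefl]
        · obtain ⟨j', rfl⟩ := Fin.exists_succAbove_eq hj
          simp [hY, Fin.insertNth_apply_succAbove, Fin.removeNth, Function.update_of_ne hj]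
      have hDrep : D = fun w => T (i.removeNth w) (φ (w i)) := by
        funext w
        simp only [hD, hT, hφdef, hδ, ContinuousLinearMap.comp_apply, coordL_apply]
        rw [hYind w]
      have hφint : Integrable φ (μ i) := (hvalint i).sub (integrable_const _)
      have hφ0 : ∫ a, φ a ∂(μ i) = 0 := by
        rw [hφdef]
        rw [integral_sub (hvalint i) (integrable_const _), hmval i, integral_const,
          probReal_univ, one_smul, sub_self]
      rw [hDrep]
      rw [hDrep] at hDint
      exact integral_indep_zero μ i T φ hDint hφint hφ0
    -- conclude
    have hlhs : ∫ w, (D w - (c i i * M ^ 2) / 2) ∂(Measure.pi μ)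
        = -((c i i * M ^ 2) / 2) := by
      rw [integral_sub hDint (integrable_const _), hDzero, integral_const, probReal_univ,
        one_smul, zero_sub]
    have hmono : ∫ w, (D w - (c i i * M ^ 2) / 2) ∂(Measure.pi μ)
        ≤ ∫ w, (f (Y ((i : ℕ) + 1) w) - f (Y (i : ℕ) w)) ∂(Measure.pi μ) :=
      integral_mono (hDint.sub (integrable_const _)) ((hFint _).sub (hFint _)) hpt
    rw [ge_iff_le]
    calc -(M ^ 2 / 2) * c i i = -((c i i * M ^ 2) / 2) := by ring
      _ = ∫ w, (D w - (c i i * M ^ 2) / 2) ∂(Measure.pi μ) := hlhs.symm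
      _ ≤ _ := hmono
  -- assembling
  have htel : ∀ w, f (ι w) - f m =
      ∑ i : Fin (n' + 1), (f (Y ((i : ℕ) + 1) w) - f (Y (i : ℕ) w)) := by
    intro w
    rw [Fin.sum_univ_eq_sum_range (fun k => f (Y (k + 1) w) - f (Y k w)) (n' + 1)]
    rw [Finset.sum_range_sub (fun k => f (Y k w))]
    rw [hY0, hYtop]
  calc ∫ w, (f (ι w) - f m) ∂(Measure.pi μ)
      = ∑ i : Fin (n' + 1), ∫ w, (f (Y ((i : ℕ) + 1) w) - f (Y (i : ℕ) w)) ∂(Measure.pi μ) := by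
        have hsum := integral_finset_sum (μ := Measure.pi μ) Finset.univ
          (f := fun (i : Fin (n' + 1)) (w : ∀ j, W j) =>
            f (Y ((i : ℕ) + 1) w) - f (Y (i : ℕ) w))
          (fun i _ => (hFint _).sub (hFint _))
        rw [← hsum]
        exact integral_congr_ae (ae_of_all _ fun w => htel w)
    _ ≥ ∑ i : Fin (n' + 1), -(M ^ 2 / 2) * c i i := by
        apply Finset.sum_le_sum
        exact fun i _ => key i
    _ = -(M ^ 2 / 2) * ∑ i, c i i := by rw [Finset.mul_sum]
end

section
/- Covering of the tilted conditional means: In the Banach-space product setting, let x ∈ W, let x̂ = (x̂_1,…,x̂_n) be the vector of tilted conditional means under e^f, and let d = (d_1,…,d_n) be bounded linear functionals with Σ_{i=1}^n ‖f_i(x) − d_i‖² ≤ ε²n, with tilted means p_i = ∫_{W_i} z e^{d_i(z)} dμ_i(z) / ∫_{W_i} e^{d_i(z)} dμ_i(z). Then ( Σ_{i=1}^n ‖x̂_i − p_i‖²_{V_i} )^{1/2} ≤ √2 · M³ ( Σ_{i=1}^n c_{ii}² )^{1/2} + √2 · M² n^{1/2} ε. -/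
open MeasureTheory Real

/-- The tilted conditional mean `x̂ᵢ` of the `i`-th coordinate under `e^f`. -/
noncomputable def tiltedCondMean {n : ℕ} {V : Fin n → Type*}
    [∀ i, NormedAddCommGroup (V i)] [∀ i, NormedSpace ℝ (V i)]
    [∀ i, MeasurableSpace (V i)]
    (μ : ∀ i, Measure (V i)) (f : (∀ j, V j) → ℝ) (x : ∀ j, V j) (i : Fin n) : V i :=
  (∫ z, Real.exp (f (Function.update x i z)) ∂(μ i))⁻¹ •
    ∫ z, Real.exp (f (Function.update x i z)) • z ∂(μ i)

/-- The mean of the exponential tilt of `μ` by a bounded linear functional `d`. -/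
noncomputable def tiltMean {E : Type*} [NormedAddCommGroup E] [NormedSpace ℝ E]
    [MeasurableSpace E] (μ : Measure E) (d : E →L[ℝ] ℝ) : E :=
  (∫ z, Real.exp (d z) ∂μ)⁻¹ • ∫ z, Real.exp (d z) • z ∂μ

section TiltAux
variable {E : Type*} [NormedAddCommGroup E] [NormedSpace ℝ E]
  [MeasurableSpace E] [BorelSpace E] {ν : Measure E} [IsProbabilityMeasure ν] {K : Set E}

lemma aux_ae_mem (hKc : IsCompact K) (hνK : ν K = 1) : ∀ᵐ z ∂ν, z ∈ K := by
  have h0 : ν Kᶜ = 0 := by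
    have := measure_compl hKc.isClosed.measurableSet (measure_ne_top ν K)
    rw [hνK] at this; simpa [measure_univ] using this
  exact MeasureTheory.mem_ae_iff.mpr (by simpa using h0)

lemma aux_integrable_exp (haeK : ∀ᵐ z ∂ν, z ∈ K) (hKc : IsCompact K) {q : E → ℝ}
    (hq : Continuous q) : Integrable (fun z => exp (q z)) ν := by
  obtain ⟨C, hC⟩ := hKc.exists_bound_of_continuousOn hq.continuousOn
  refine Integrable.mono' (integrable_const (Real.exp C))
    (Real.continuous_exp.comp hq).aestronglyMeasurable ?_
  filter_upwards [haeK] with z hz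
  rw [Real.norm_eq_abs, abs_of_nonneg (Real.exp_pos _).le]
  exact Real.exp_le_exp.2 ((le_abs_self _).trans (Real.norm_eq_abs _ ▸ hC z hz))

lemma aux_integrable_exp_smul (haeK : ∀ᵐ z ∂ν, z ∈ K) (hKc : IsCompact K) {q : E → ℝ}
    (hq : Continuous q) : Integrable (fun z => exp (q z) • z) ν := by
  obtain ⟨C, hC⟩ := hKc.exists_bound_of_continuousOn hq.continuousOn
  obtain ⟨R, hR⟩ := hKc.exists_bound_of_continuousOn continuous_id.continuousOn
  have hres : ν.restrict K = ν := Measure.restrict_eq_self_of_ae_mem haeK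
  have hcont : Continuous (fun z : E => exp (q z) • z) := by fun_prop
  have hmeas : AEStronglyMeasurable (fun z : E => exp (q z) • z) ν := by
    rw [← hres]
    exact hcont.continuousOn.aestronglyMeasurable_of_isCompact hKc
      hKc.isClosed.measurableSet
  refine Integrable.mono' (integrable_const (Real.exp C * max R 0)) hmeas ?_
  filter_upwards [haeK] with z hz
  rw [norm_smul, Real.norm_eq_abs, abs_of_nonneg (Real.exp_pos _).le]
  have h1 : exp (q z) ≤ exp C :=
    Real.exp_le_exp.2 ((le_abs_self _).trans (Real.norm_eq_abs _ ▸ hC z hz))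
  have h2 : ‖z‖ ≤ max R 0 := le_trans (hR z hz) (le_max_left _ _)
  exact mul_le_mul h1 h2 (norm_nonneg _) (Real.exp_pos _).le

lemma aux_Zpos {q : E → ℝ} (hint : Integrable (fun z => exp (q z)) ν) :
    0 < ∫ z, exp (q z) ∂ν := by
  rw [integral_pos_iff_support_of_nonneg_ae
      (Filter.Eventually.of_forall fun z => (Real.exp_pos _).le) hint]
  have : Function.support (fun z : E => exp (q z)) = Set.univ := by
    ext z; simp [Function.support, Real.exp_ne_zero]
  rw [this]
  simp

end TiltAux

section TiltMain
variable {E : Type*} [NormedAddCommGroup E] [NormedSpace ℝ E] [CompleteSpace E]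
  [MeasurableSpace E] [BorelSpace E]

lemma tilt_mean_dist_le (ν : Measure E) [IsProbabilityMeasure ν] {K : Set E}
    (hKc : IsCompact K) (hνK : ν K = 1)
    {g h : E → ℝ} (hg : Continuous g) (hh : Continuous h)
    {M δ : ℝ} (hM : 0 ≤ M) (hδ : 0 ≤ δ)
    (hdiam : ∀ z ∈ K, ∀ z' ∈ K, ‖z - z'‖ ≤ M)
    (hosc : ∀ z ∈ K, ∀ z' ∈ K, (g z - h z) - (g z' - h z') ≤ δ) :
    ‖(∫ z, exp (g z) ∂ν)⁻¹ • (∫ z, exp (g z) • z ∂ν)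
      - (∫ z, exp (h z) ∂ν)⁻¹ • (∫ z, exp (h z) • z ∂ν)‖ ≤ M * δ := by
  rcases subsingleton_or_nontrivial E with hE | hE
  · have h0 : ((∫ z, exp (g z) ∂ν)⁻¹ • (∫ z, exp (g z) • z ∂ν)
      - (∫ z, exp (h z) ∂ν)⁻¹ • (∫ z, exp (h z) • z ∂ν)) = 0 := Subsingleton.elim _ _
    rw [h0, norm_zero]
    positivity
  have hKne : K.Nonempty := by
    rcases K.eq_empty_or_nonempty with rfl | hne
    · simp at hνK
    · exact hne
  have haeK : ∀ᵐ z ∂ν, z ∈ K := aux_ae_mem hKc hνK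
  -- integrabilities
  have hig : Integrable (fun z => exp (g z)) ν := aux_integrable_exp haeK hKc hg
  have hih : Integrable (fun z => exp (h z)) ν := aux_integrable_exp haeK hKc hh
  have higz : Integrable (fun z => exp (g z) • z) ν := aux_integrable_exp_smul haeK hKc hg
  have hihz : Integrable (fun z => exp (h z) • z) ν := aux_integrable_exp_smul haeK hKc hh
  set Zg := ∫ z, exp (g z) ∂ν with hZg
  set Zh := ∫ z, exp (h z) ∂ν with hZh
  have hZgpos : 0 < Zg := aux_Zpos hig
  have hZhpos : 0 < Zh := aux_Zpos hih
  set pg := Zg⁻¹ • (∫ z, exp (g z) • z ∂ν) with hpg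
  set ph := Zh⁻¹ • (∫ z, exp (h z) • z ∂ν) with hph
  -- dual vector
  obtain ⟨u, hu1, hupg⟩ := exists_dual_vector' ℝ (pg - ph)
  -- max and min of u on K
  obtain ⟨z₀, hz₀K, hz₀⟩ := hKc.exists_isMaxOn hKne u.continuous.continuousOn
  obtain ⟨z₁, hz₁K, hz₁⟩ := hKc.exists_isMinOn hKne u.continuous.continuousOn
  set s : ℝ := (u z₀ + u z₁) / 2 with hs
  have hus : ∀ z ∈ K, |u z - s| ≤ M / 2 := by
    intro z hz
    have h1 : u z ≤ u z₀ := hz₀ hz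
    have h2 : u z₁ ≤ u z := hz₁ hz
    have h3 : u z₀ - u z₁ ≤ M := by
      have := u.le_opNorm (z₀ - z₁)
      rw [hu1, one_mul] at this
      have h4 : u z₀ - u z₁ = u (z₀ - z₁) := by rw [map_sub]
      calc u z₀ - u z₁ = u (z₀ - z₁) := h4
        _ ≤ ‖u (z₀ - z₁)‖ := le_abs_self _
        _ ≤ ‖z₀ - z₁‖ := this
        _ ≤ M := hdiam z₀ hz₀K z₁ hz₁K
    rw [abs_le]
    constructor <;> [skip; skip] <;> simp only [hs] <;> linarith
  -- densities
  set wg : E → ℝ := fun z => Zg⁻¹ * exp (g z) with hwg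
  set wh : E → ℝ := fun z => Zh⁻¹ * exp (h z) with hwh
  have hiwg : Integrable wg ν := hig.const_mul _
  have hiwh : Integrable wh ν := hih.const_mul _
  have hIwg : ∫ z, wg z ∂ν = 1 := by
    rw [hwg]; simp only []
    rw [integral_const_mul]
    field_simp
    rfl
  have hIwh : ∫ z, wh z ∂ν = 1 := by
    rw [hwh]; simp only []
    rw [integral_const_mul]
    field_simp
    rfl
  -- key pointwise bound : for z ∈ K, wh z - wg z ≤ δ * wh z
  have hkey : ∀ z ∈ K, wh z - wg z ≤ δ * wh z := by
    intro z hz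
    -- Zg ≤ Zh * exp (g z - h z + δ)
    have hZle : Zg ≤ Zh * exp (g z - h z + δ) := by
      have hmono : ∀ᵐ z' ∂ν, exp (g z') ≤ exp (h z') * exp (g z - h z + δ) := by
        filter_upwards [haeK] with z' hz'
        rw [← Real.exp_add]
        exact Real.exp_le_exp.2 (by have := hosc z' hz' z hz; linarith)
      calc Zg ≤ ∫ z', exp (h z') * exp (g z - h z + δ) ∂ν :=
            integral_mono_ae hig (hih.mul_const _) hmono
        _ = Zh * exp (g z - h z + δ) := integral_mul_const _ _
    -- hence exp (-δ) * wh z ≤ wg z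
    have hlow : exp (-δ) * wh z ≤ wg z := by
      have hZgexp : 0 < Zh * exp (g z - h z + δ) := by positivity
      have h5 : exp (g z) * (Zh * exp (g z - h z + δ))⁻¹ ≤ exp (g z) * Zg⁻¹ := by
        have : Zg⁻¹ ≥ (Zh * exp (g z - h z + δ))⁻¹ := by
          apply inv_anti₀ hZgpos hZle
        exact mul_le_mul_of_nonneg_left this (Real.exp_pos _).le
      have h6 : exp (g z) * (Zh * exp (g z - h z + δ))⁻¹ = exp (-δ) * wh z := by
        rw [hwh]; simp only []
        rw [mul_inv, ← Real.exp_neg]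
        have e : exp (g z) * exp (-(g z - h z + δ)) = exp (-δ) * exp (h z) := by
          rw [← Real.exp_add, ← Real.exp_add]
          congr 1
          ring
        calc exp (g z) * (Zh⁻¹ * exp (-(g z - h z + δ)))
            = (exp (g z) * exp (-(g z - h z + δ))) * Zh⁻¹ := by ring
          _ = (exp (-δ) * exp (h z)) * Zh⁻¹ := by rw [e]
          _ = exp (-δ) * (Zh⁻¹ * exp (h z)) := by ring
      calc exp (-δ) * wh z = exp (g z) * (Zh * exp (g z - h z + δ))⁻¹ := h6.symm
        _ ≤ exp (g z) * Zg⁻¹ := h5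
        _ = wg z := by rw [hwg]; ring
    have hwhpos : 0 ≤ wh z := by positivity
    have hexpδ : 1 - exp (-δ) ≤ δ := by
      have := Real.add_one_le_exp (-δ); linarith
    nlinarith [mul_le_mul_of_nonneg_right hexpδ hwhpos]
  -- integrability of (u z - s) * w
  have hmulint : ∀ w : E → ℝ, Integrable w ν → Integrable (fun z => (u z - s) * w z) ν := by
    intro w hw
    refine hw.bdd_mul (c := M / 2) ((u.continuous.sub continuous_const).aestronglyMeasurable) ?_
    filter_upwards [haeK] with z hz
    rw [Real.norm_eq_abs]
    exact hus z hz
  -- TV bound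
  have hsub' : Integrable (fun z => wh z - wg z) ν := hiwh.sub hiwg
  have himax : Integrable (fun z => max (wh z - wg z) 0) ν := hsub'.pos_part
  have hTV : ∫ z, |wg z - wh z| ∂ν ≤ 2 * δ := by
    have hid : ∀ z, |wg z - wh z| = (wg z - wh z) + 2 * max (wh z - wg z) 0 := by
      intro z
      rcases le_total (wg z) (wh z) with h' | h'
      · rw [abs_of_nonpos (by linarith), max_eq_left (by linarith)]; ring
      · rw [abs_of_nonneg (by linarith), max_eq_right (by linarith)]; ring
    have hre : ∫ z, |wg z - wh z| ∂ν
        = ∫ z, ((wg z - wh z) + 2 * max (wh z - wg z) 0) ∂ν :=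
      integral_congr_ae (Filter.Eventually.of_forall hid)
    have hsub : Integrable (fun z => wg z - wh z) ν := hiwg.sub hiwh
    rw [hre, integral_add hsub (himax.const_mul 2),
        integral_sub hiwg hiwh, hIwg, hIwh, integral_const_mul]
    have hm : ∫ z, max (wh z - wg z) 0 ∂ν ≤ ∫ z, δ * wh z ∂ν := by
      apply integral_mono_ae himax (hiwh.const_mul δ)
      filter_upwards [haeK] with z hz
      refine max_le (hkey z hz) ?_
      have : 0 ≤ wh z := by positivity
      positivity
    rw [integral_const_mul, hIwh, mul_one] at hm
    linarith
  -- representation of u p - s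
  have hrep : ∀ (Z : ℝ) (hZ : 0 < Z) (q : E → ℝ)
      (hiq : Integrable (fun z => exp (q z)) ν)
      (hiqz : Integrable (fun z => exp (q z) • z) ν)
      (hIw : ∫ z, Z⁻¹ * exp (q z) ∂ν = 1),
      u (Z⁻¹ • ∫ z, exp (q z) • z ∂ν) - s
        = ∫ z, (u z - s) * (Z⁻¹ * exp (q z)) ∂ν := by
    intro Z hZ q hiq hiqz hIw
    have h2 : ∫ z, u (exp (q z) • z) ∂ν = u (∫ z, exp (q z) • z ∂ν) :=
      u.integral_comp_comm hiqz
    have h3 : u (Z⁻¹ • ∫ z, exp (q z) • z ∂ν) = ∫ z, u z * (Z⁻¹ * exp (q z)) ∂ν := by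
      rw [_root_.map_smul, smul_eq_mul, ← h2, ← integral_const_mul]
      refine integral_congr_ae (Filter.Eventually.of_forall fun z => ?_)
      show Z⁻¹ * u (exp (q z) • z) = u z * (Z⁻¹ * exp (q z))
      rw [_root_.map_smul, smul_eq_mul]
      ring
    have h4 : Integrable (fun z => u z * (Z⁻¹ * exp (q z))) ν := by
      have := hmulint _ (hiq.const_mul Z⁻¹)
      have h5 : Integrable (fun z => s * (Z⁻¹ * exp (q z))) ν :=
        (hiq.const_mul Z⁻¹).const_mul s
      have h6 := this.add h5
      refine h6.congr (Filter.Eventually.of_forall fun z => ?_)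
      simp only [Pi.add_apply]
      ring
    rw [h3]
    calc (∫ z, u z * (Z⁻¹ * exp (q z)) ∂ν) - s
        = (∫ z, u z * (Z⁻¹ * exp (q z)) ∂ν) - ∫ z, s * (Z⁻¹ * exp (q z)) ∂ν := by
          rw [integral_const_mul, hIw, mul_one]
      _ = ∫ z, (u z * (Z⁻¹ * exp (q z)) - s * (Z⁻¹ * exp (q z))) ∂ν :=
          (integral_sub h4 ((hiq.const_mul Z⁻¹).const_mul s)).symm
      _ = ∫ z, (u z - s) * (Z⁻¹ * exp (q z)) ∂ν := by
          refine integral_congr_ae (Filter.Eventually.of_forall fun z => ?_)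
          ring
  have hrepg : u pg - s = ∫ z, (u z - s) * wg z ∂ν := hrep Zg hZgpos g hig higz hIwg
  have hreph : u ph - s = ∫ z, (u z - s) * wh z ∂ν := hrep Zh hZhpos h hih hihz hIwh
  -- final chain
  have hfinal : ‖pg - ph‖ = ∫ z, (u z - s) * (wg z - wh z) ∂ν := by
    have h7 : u (pg - ph) = (u pg - s) - (u ph - s) := by rw [_root_.map_sub]; ring
    have h8 : (‖pg - ph‖ : ℝ) = u (pg - ph) := hupg.symm
    rw [h8, h7, hrepg, hreph, ← integral_sub (hmulint _ hiwg) (hmulint _ hiwh)]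
    refine integral_congr_ae (Filter.Eventually.of_forall fun z => ?_)
    ring
  rw [hfinal]
  have hintgh : Integrable (fun z => (u z - s) * (wg z - wh z)) ν := by
    have := (hmulint _ hiwg).sub (hmulint _ hiwh)
    refine this.congr (Filter.Eventually.of_forall fun z => ?_)
    simp only [Pi.sub_apply]
    ring
  have habs : Integrable (fun z => (M / 2) * |wg z - wh z|) ν :=
    ((hiwg.sub hiwh).abs).const_mul _
  have hle : ∫ z, (u z - s) * (wg z - wh z) ∂ν ≤ ∫ z, (M / 2) * |wg z - wh z| ∂ν := by
    apply integral_mono_ae hintgh habs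
    filter_upwards [haeK] with z hz
    calc (u z - s) * (wg z - wh z) ≤ |(u z - s) * (wg z - wh z)| := le_abs_self _
      _ = |u z - s| * |wg z - wh z| := abs_mul _ _
      _ ≤ (M / 2) * |wg z - wh z| := by
          exact mul_le_mul_of_nonneg_right (hus z hz) (abs_nonneg _)
  calc ∫ z, (u z - s) * (wg z - wh z) ∂ν ≤ ∫ z, (M / 2) * |wg z - wh z| ∂ν := hle
    _ = (M / 2) * ∫ z, |wg z - wh z| ∂ν := integral_const_mul _ _
    _ ≤ (M / 2) * (2 * δ) := by
        apply mul_le_mul_of_nonneg_left hTV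
        linarith
    _ = M * δ := by ring

end TiltMain

/-- **Covering of the tilted conditional means.** If
`∑ ‖f_i(x) - d i‖² ≤ ε² n`, then
`(∑ ‖x̂ᵢ - pᵢ‖²)^{1/2} ≤ √2 M³ (∑ c_{ii}²)^{1/2} + √2 M² n^{1/2} ε`. -/
theorem covering_of_tilted_means
    {n : ℕ} {V : Fin n → Type*}
    [∀ i, NormedAddCommGroup (V i)] [∀ i, NormedSpace ℝ (V i)]
    [∀ i, CompleteSpace (V i)] [∀ i, MeasurableSpace (V i)] [∀ i, BorelSpace (V i)]
    (μ : ∀ i, Measure (V i)) [∀ i, IsProbabilityMeasure (μ i)]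
    (W : ∀ i, Set (V i))
    (hWc : ∀ i, IsCompact (W i)) (hWconv : ∀ i, Convex ℝ (W i))
    (hμW : ∀ i, μ i (W i) = 1)
    (f : (∀ j, V j) → ℝ)
    (hf1 : Differentiable ℝ f) (hf2 : Differentiable ℝ (fderiv ℝ f))
    (c : Fin n → Fin n → ℝ) (hc_pos : ∀ i j, 0 < c i j)
    (hc : ∀ x ∈ Set.univ.pi W, ∀ (i : Fin n) (zi ri : V i),
      |fderiv ℝ (fun y => fderiv ℝ f y (Pi.single i zi)) x (Pi.single i ri)|
        ≤ c i i * ‖zi‖ * ‖ri‖)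
    (M : ℝ) (hM : 0 < M)
    (hMW : ∀ i, ∀ z ∈ W i, ∀ z' ∈ W i, ‖z - z'‖ ≤ M)
    (ε : ℝ) (hε : 0 < ε)
    (x : ∀ j, V j) (hx : x ∈ Set.univ.pi W)
    (d : ∀ i, V i →L[ℝ] ℝ)
    (hd : ∑ i, ‖partialD f x i - d i‖ ^ 2 ≤ ε ^ 2 * n) :
    Real.sqrt (∑ i, ‖tiltedCondMean μ f x i - tiltMean (μ i) (d i)‖ ^ 2) ≤
      Real.sqrt 2 * M ^ 3 * Real.sqrt (∑ i, c i i ^ 2)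
        + Real.sqrt 2 * M ^ 2 * Real.sqrt n * ε := by
  classical
  have hxW : ∀ i, x i ∈ W i := fun i => hx i (Set.mem_univ i)
  -- per-coordinate bound
  have hbnd : ∀ i, ‖tiltedCondMean μ f x i - tiltMean (μ i) (d i)‖
      ≤ M ^ 3 * c i i + M ^ 2 * ‖partialD f x i - d i‖ := by
    intro i
    set eV : ℝ := ‖partialD f x i - d i‖ with heV
    -- the affine update map
    set b : ∀ j, V j := x - Pi.single i (x i) with hb
    have hcoordL : ∀ z : V i, coordL V i z = Pi.single i z := fun z => rfl
    have hupd : ∀ z : V i, Function.update x i z = b + Pi.single i z := by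
      intro z; funext j
      by_cases hj : j = i
      · subst hj; simp [hb]
      · simp [hb, Function.update_of_ne hj, Pi.single_eq_of_ne hj]
    have heq : (fun z : V i => Function.update x i z)
        = fun z => b + coordL V i z := by
      funext z; rw [hupd z, hcoordL]
    have hAff : ∀ ξ : V i, HasFDerivAt (fun z : V i => Function.update x i z)
        (coordL V i) ξ := by
      intro ξ
      rw [heq]
      exact (coordL V i).hasFDerivAt.const_add b
    have hgd : ∀ ξ : V i, HasFDerivAt (fun z : V i => f (Function.update x i z))
        ((fderiv ℝ f (Function.update x i ξ)).comp (coordL V i)) ξ := by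
      intro ξ
      exact (hf1 (Function.update x i ξ)).hasFDerivAt.comp ξ (hAff ξ)
    have hmem : ∀ ξ ∈ W i, Function.update x i ξ ∈ Set.univ.pi W := by
      intro ξ hξ j _
      by_cases hj : j = i
      · subst hj; simpa using hξ
      · simpa [Function.update_of_ne hj] using hxW j
    have hΨd : ∀ zi : V i, Differentiable ℝ (fun y => fderiv ℝ f y (Pi.single i zi)) :=
      fun zi => (ContinuousLinearMap.apply ℝ ℝ (Pi.single i zi)).differentiable.comp hf2
    have hGd : ∀ (zi : V i) (ξ : V i), HasFDerivAt
        (fun w : V i => fderiv ℝ f (Function.update x i w) (Pi.single i zi))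
        ((fderiv ℝ (fun y => fderiv ℝ f y (Pi.single i zi))
          (Function.update x i ξ)).comp (coordL V i)) ξ := by
      intro zi ξ
      exact ((hΨd zi) (Function.update x i ξ)).hasFDerivAt.comp ξ (hAff ξ)
    -- second-order bound
    have hsec : ∀ ξ ∈ W i, ∀ zi : V i,
        ‖fderiv ℝ f (Function.update x i ξ) (Pi.single i zi)
          - fderiv ℝ f x (Pi.single i zi)‖ ≤ (c i i * ‖zi‖) * ‖ξ - x i‖ := by
      intro ξ hξ zi
      have hbound : ∀ w ∈ W i, ‖fderiv ℝ
          (fun w : V i => fderiv ℝ f (Function.update x i w) (Pi.single i zi)) w‖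
            ≤ c i i * ‖zi‖ := by
        intro w hw
        rw [(hGd zi w).fderiv]
        refine ContinuousLinearMap.opNorm_le_bound _
          (mul_nonneg (hc_pos i i).le (norm_nonneg _)) fun ri => ?_
        have h1 : ((fderiv ℝ (fun y => fderiv ℝ f y (Pi.single i zi))
            (Function.update x i w)).comp (coordL V i)) ri
            = fderiv ℝ (fun y => fderiv ℝ f y (Pi.single i zi))
              (Function.update x i w) (Pi.single i ri) := rfl
        rw [h1, Real.norm_eq_abs]
        calc |fderiv ℝ (fun y => fderiv ℝ f y (Pi.single i zi))
              (Function.update x i w) (Pi.single i ri)|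
            ≤ c i i * ‖zi‖ * ‖ri‖ := hc _ (hmem w hw) i zi ri
          _ = (c i i * ‖zi‖) * ‖ri‖ := by ring
      have hmvt := Convex.norm_image_sub_le_of_norm_fderiv_le
        (fun w _ => (hGd zi w).differentiableAt) hbound (hWconv i) (hxW i) hξ
      have hupdx : Function.update x i (x i) = x := Function.update_eq_self i x
      rw [hupdx] at hmvt
      exact hmvt
    -- first derivative (partialD) variation bound
    have hpartial : ∀ ξ ∈ W i,
        ‖partialD f (Function.update x i ξ) i - partialD f x i‖ ≤ c i i * M := by
      intro ξ hξ
      refine ContinuousLinearMap.opNorm_le_bound _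
        (mul_nonneg (hc_pos i i).le hM.le) fun zi => ?_
      have h1 : (partialD f (Function.update x i ξ) i - partialD f x i) zi
          = fderiv ℝ f (Function.update x i ξ) (Pi.single i zi)
            - fderiv ℝ f x (Pi.single i zi) := rfl
      rw [h1]
      calc ‖fderiv ℝ f (Function.update x i ξ) (Pi.single i zi)
            - fderiv ℝ f x (Pi.single i zi)‖
          ≤ (c i i * ‖zi‖) * ‖ξ - x i‖ := hsec ξ hξ zi
        _ ≤ (c i i * ‖zi‖) * M := by
            refine mul_le_mul_of_nonneg_left (hMW i ξ hξ (x i) (hxW i))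
              (mul_nonneg (hc_pos i i).le (norm_nonneg _))
        _ = (c i i * M) * ‖zi‖ := by ring
    -- derivative of φ
    have hφd : ∀ ξ : V i, HasFDerivAt
        (fun z : V i => f (Function.update x i z) - d i z)
        (partialD f (Function.update x i ξ) i - d i) ξ := by
      intro ξ
      exact (hgd ξ).sub (d i).hasFDerivAt
    -- oscillation bound
    have hCnonneg : 0 ≤ c i i * M + eV :=
      add_nonneg (mul_nonneg (hc_pos i i).le hM.le) (norm_nonneg _)
    have hosc : ∀ z ∈ W i, ∀ z' ∈ W i,
        (f (Function.update x i z) - d i z) - (f (Function.update x i z') - d i z')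
          ≤ M * (c i i * M + eV) := by
      intro z hz z' hz'
      have hbound : ∀ w ∈ W i, ‖fderiv ℝ
          (fun z : V i => f (Function.update x i z) - d i z) w‖ ≤ c i i * M + eV := by
        intro w hw
        rw [(hφd w).fderiv]
        calc ‖partialD f (Function.update x i w) i - d i‖
            ≤ ‖partialD f (Function.update x i w) i - partialD f x i‖
              + ‖partialD f x i - d i‖ := norm_sub_le_norm_sub_add_norm_sub _ _ _
          _ ≤ c i i * M + eV := by
              rw [← heV]
              exact add_le_add_left (hpartial w hw) eV
      have hmvt := Convex.norm_image_sub_le_of_norm_fderiv_le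
        (fun w _ => (hφd w).differentiableAt) hbound (hWconv i) hz' hz
      calc (f (Function.update x i z) - d i z) - (f (Function.update x i z') - d i z')
          ≤ ‖(f (Function.update x i z) - d i z)
              - (f (Function.update x i z') - d i z')‖ := le_abs_self _
        _ ≤ (c i i * M + eV) * ‖z - z'‖ := hmvt
        _ ≤ (c i i * M + eV) * M :=
            mul_le_mul_of_nonneg_left (hMW i z hz z' hz') hCnonneg
        _ = M * (c i i * M + eV) := by ring
    -- continuity
    have hgc : Continuous (fun z : V i => f (Function.update x i z)) :=
      continuous_iff_continuousAt.mpr fun z => (hgd z).continuousAt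
    -- apply the tilt-mean stability lemma
    have hδ : 0 ≤ M * (c i i * M + eV) := mul_nonneg hM.le hCnonneg
    have htilt := tilt_mean_dist_le (μ i) (hWc i) (hμW i) hgc (d i).continuous
      hM.le hδ (hMW i) hosc
    calc ‖tiltedCondMean μ f x i - tiltMean (μ i) (d i)‖
        = ‖(∫ z, exp (f (Function.update x i z)) ∂(μ i))⁻¹ •
            (∫ z, exp (f (Function.update x i z)) • z ∂(μ i))
          - (∫ z, exp (d i z) ∂(μ i))⁻¹ • (∫ z, exp (d i z) • z ∂(μ i))‖ := rfl
      _ ≤ M * (M * (c i i * M + eV)) := htilt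
      _ = M ^ 3 * c i i + M ^ 2 * eV := by ring
  -- assembly via the Euclidean norm
  set a : EuclideanSpace ℝ (Fin n) := WithLp.toLp 2 (fun i => M ^ 3 * c i i) with ha
  set bb : EuclideanSpace ℝ (Fin n) := WithLp.toLp 2 (fun i => M ^ 2 * ‖partialD f x i - d i‖) with hbb
  have hanonneg : ∀ i, 0 ≤ a i := fun i => mul_nonneg (by positivity) (hc_pos i i).le
  have hbnonneg : ∀ i, 0 ≤ bb i := fun i => mul_nonneg (by positivity) (norm_nonneg _)
  have h1 : Real.sqrt (∑ i, ‖tiltedCondMean μ f x i - tiltMean (μ i) (d i)‖ ^ 2)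
      ≤ ‖a + bb‖ := by
    rw [EuclideanSpace.norm_eq]
    apply Real.sqrt_le_sqrt
    apply Finset.sum_le_sum
    intro i _
    have h2 : ‖(a + bb) i‖ = a i + bb i := by
      rw [PiLp.add_apply, Real.norm_eq_abs,
        abs_of_nonneg (add_nonneg (hanonneg i) (hbnonneg i))]
    rw [h2]
    exact pow_le_pow_left₀ (norm_nonneg _) (hbnd i) 2
  have hna : ‖a‖ = M ^ 3 * Real.sqrt (∑ i, c i i ^ 2) := by
    rw [EuclideanSpace.norm_eq]
    have h3 : ∀ i : Fin n, ‖a i‖ ^ 2 = (M ^ 3) ^ 2 * c i i ^ 2 := by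
      intro i
      rw [Real.norm_eq_abs, sq_abs, ha, PiLp.toLp_apply]
      ring
    rw [Finset.sum_congr rfl fun i _ => h3 i, ← Finset.mul_sum,
      Real.sqrt_mul (sq_nonneg _), Real.sqrt_sq (by positivity)]
  have hnb : ‖bb‖ ≤ M ^ 2 * Real.sqrt ↑n * ε := by
    rw [EuclideanSpace.norm_eq]
    have h3 : ∀ i : Fin n, ‖bb i‖ ^ 2 = (M ^ 2) ^ 2 * ‖partialD f x i - d i‖ ^ 2 := by
      intro i
      rw [Real.norm_eq_abs, sq_abs, hbb, PiLp.toLp_apply]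
      ring
    rw [Finset.sum_congr rfl fun i _ => h3 i, ← Finset.mul_sum,
      Real.sqrt_mul (sq_nonneg _), Real.sqrt_sq (by positivity)]
    have h4 : Real.sqrt (∑ i, ‖partialD f x i - d i‖ ^ 2) ≤ Real.sqrt (ε ^ 2 * n) :=
      Real.sqrt_le_sqrt hd
    have h5 : Real.sqrt (ε ^ 2 * n) = ε * Real.sqrt n := by
      rw [Real.sqrt_mul (sq_nonneg _), Real.sqrt_sq hε.le]
    calc M ^ 2 * Real.sqrt (∑ i, ‖partialD f x i - d i‖ ^ 2)
        ≤ M ^ 2 * (ε * Real.sqrt ↑n) := by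
          rw [← h5]; exact mul_le_mul_of_nonneg_left h4 (by positivity)
      _ = M ^ 2 * Real.sqrt ↑n * ε := by ring
  have hsqrt2 : (1 : ℝ) ≤ Real.sqrt 2 := by
    rw [show (1 : ℝ) = Real.sqrt 1 by simp]
    exact Real.sqrt_le_sqrt (by norm_num)
  calc Real.sqrt (∑ i, ‖tiltedCondMean μ f x i - tiltMean (μ i) (d i)‖ ^ 2)
      ≤ ‖a + bb‖ := h1
    _ ≤ ‖a‖ + ‖bb‖ := norm_add_le _ _
    _ ≤ M ^ 3 * Real.sqrt (∑ i, c i i ^ 2) + M ^ 2 * Real.sqrt ↑n * ε := by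
        rw [hna]; exact add_le_add_right hnb _
    _ ≤ Real.sqrt 2 * M ^ 3 * Real.sqrt (∑ i, c i i ^ 2)
        + Real.sqrt 2 * M ^ 2 * Real.sqrt ↑n * ε := by
        have t1 : M ^ 3 * Real.sqrt (∑ i, c i i ^ 2)
            ≤ Real.sqrt 2 * M ^ 3 * Real.sqrt (∑ i, c i i ^ 2) := by
          nlinarith [Real.sqrt_nonneg (∑ i, c i i ^ 2), pow_pos hM 3,
            mul_nonneg (pow_pos hM 3).le (Real.sqrt_nonneg (∑ i, c i i ^ 2))]
        have t2 : M ^ 2 * Real.sqrt ↑n * ε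
            ≤ Real.sqrt 2 * M ^ 2 * Real.sqrt ↑n * ε := by
          nlinarith [Real.sqrt_nonneg (n : ℝ), pow_pos hM 2, hε.le,
            mul_nonneg (mul_nonneg (pow_pos hM 2).le (Real.sqrt_nonneg (n : ℝ))) hε.le]
        linarith
end

section
/- Smoothness-complexity error bound (Δ₂ ≤ B₂): In the Banach-space product setting, fix θ ∈ W and ε > 0; let x ∈ W, let x̂ be the vector of tilted conditional means, let d = (d_1,…,d_n) be bounded linear functionals with Σ_{i=1}^n ‖f_i(x) − d_i‖² ≤ ε²n, and let p_i = ∫_{W_i} z e^{d_i(z)} dμ_i / ∫_{W_i} e^{d_i(z)} dμ_i. Then |f(x̂) − f(p)| + |Σ_{i=1}^n d_i(x̂_i − p_i)| + |Σ_{i=1}^n ( d_i − f_i(x^{(i)}_{θ_i}) )(x̂_i − x_i)| ≤ 4( Σ_{i=1}^n b_i² + ε²n )^{1/2} ( M³ (Σ_{i=1}^n c_{ii}²)^{1/2} + M² n^{1/2} ε ) + Σ_{i=1}^n M² c_{ii} + M n ε. -/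
open MeasureTheory Real
open scoped NNReal ENNReal

section TiltAux
variable {E : Type*} [NormedAddCommGroup E] [NormedSpace ℝ E] [CompleteSpace E]
  [MeasurableSpace E] [BorelSpace E]
  {μ : Measure E} [IsProbabilityMeasure μ] {W : Set E}

lemma ae_mem_of_one (hWc : IsCompact W) (hμW : μ W = 1) : ∀ᵐ z ∂μ, z ∈ W := by
  have : μ Wᶜ = 0 := by
    rw [measure_compl hWc.isClosed.measurableSet (measure_ne_top μ W), hμW, measure_univ,
      tsub_self]
  exact (MeasureTheory.ae_iff).2 (by simpa [Set.compl_def] using this)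

lemma integrable_of_cont {F : Type*} [NormedAddCommGroup F] (hWc : IsCompact W)
    (hμW : μ W = 1) (φ : E → F) (hφ : Continuous φ) : Integrable φ μ := by
  have hmem := ae_mem_of_one hWc hμW
  have hsm : AEStronglyMeasurable φ μ := by
    have := hφ.continuousOn.aestronglyMeasurable_of_isCompact hWc
      hWc.isClosed.measurableSet (μ := μ)
    rwa [Measure.restrict_eq_self_of_ae_mem hmem] at this
  obtain ⟨C, hC⟩ := hWc.exists_bound_of_continuousOn hφ.continuousOn
  exact ⟨hsm, HasFiniteIntegral.of_bounded (hmem.mono fun z hz => hC z hz)⟩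

lemma tilt_mean_mem (hWc : IsCompact W) (hWconv : Convex ℝ W) (hμW : μ W = 1)
    {g : E → ℝ} (hg : Continuous g) :
    (∫ z, exp (g z) ∂μ)⁻¹ • ∫ z, exp (g z) • z ∂μ ∈ W := by
  have hint : Integrable (fun z => exp (g z)) μ := integrable_of_cont hWc hμW _ hg.rexp
  have hZ : 0 < ∫ z, exp (g z) ∂μ := integral_exp_pos hint
  set ρ : E → ℝ≥0 := fun z => (exp (g z)).toNNReal with hρ
  have hρm : Measurable ρ := measurable_real_toNNReal.comp (hg.rexp.measurable)
  set ν : Measure E := μ.withDensity (fun z => (ρ z : ℝ≥0∞)) with hν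
  have hνuniv : ν Set.univ = ENNReal.ofReal (∫ z, exp (g z) ∂μ) := by
    rw [hν, withDensity_apply _ MeasurableSet.univ, Measure.restrict_univ,
      ofReal_integral_eq_lintegral_ofReal hint (Filter.Eventually.of_forall fun z => (exp_pos _).le)]
    rfl
  have hfin : IsFiniteMeasure ν := by
    constructor; rw [hνuniv]; exact ENNReal.ofReal_lt_top
  have hne : NeZero ν := by
    constructor
    intro h
    rw [h, Measure.coe_zero, Pi.zero_apply] at hνuniv
    exact absurd hνuniv.symm (by simp [ENNReal.ofReal_eq_zero, not_le, hZ])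
  have hmemν : ∀ᵐ z ∂ν, z ∈ W :=
    (withDensity_absolutelyContinuous μ _).ae_le (ae_mem_of_one hWc hμW)
  have hid : Integrable (fun z => z) ν := by
    rw [hν, integrable_withDensity_iff_integrable_smul hρm]
    have : (fun z => ρ z • z) = fun z => exp (g z) • z := by
      funext z
      rw [NNReal.smul_def, hρ, Real.coe_toNNReal _ (exp_pos _).le]
    rw [this]
    exact integrable_of_cont hWc hμW _ (hg.rexp.smul continuous_id)
  have hmem := hWconv.average_mem hWc.isClosed hmemν hid
  rw [average_eq, measureReal_def, hνuniv, ENNReal.toReal_ofReal hZ.le] at hmem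
  have : ∫ z, z ∂ν = ∫ z, exp (g z) • z ∂μ := by
    rw [hν, integral_withDensity_eq_integral_smul hρm]
    congr 1
    funext z
    rw [NNReal.smul_def, hρ, Real.coe_toNNReal _ (exp_pos _).le]
  rwa [this] at hmem

lemma tilt_mean_diff (hWc : IsCompact W) (hWconv : Convex ℝ W) (hμW : μ W = 1)
    {g h : E → ℝ} (hg : Continuous g) (hh : Continuous h)
    {δ M : ℝ} (hδ : 0 ≤ δ)
    (hMW : ∀ z ∈ W, ∀ z' ∈ W, ‖z - z'‖ ≤ M)
    (hosc : ∀ z ∈ W, ∀ z' ∈ W, (g z - h z) - (g z' - h z') ≤ δ) :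
    ‖(∫ z, exp (g z) ∂μ)⁻¹ • ∫ z, exp (g z) • z ∂μ
      - (∫ z, exp (h z) ∂μ)⁻¹ • ∫ z, exp (h z) • z ∂μ‖ ≤ δ * M := by
  have hWne : W.Nonempty := by
    rcases Set.eq_empty_or_nonempty W with hE | hne
    · exfalso; rw [hE, measure_empty] at hμW; exact zero_ne_one hμW
    · exact hne
  obtain ⟨z₀, hz₀, hmin⟩ := hWc.exists_isMinOn hWne (hg.sub hh).continuousOn
  set m : ℝ := g z₀ - h z₀ with hm
  set Zg : ℝ := ∫ z, exp (g z) ∂μ with hZg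
  set Zh : ℝ := ∫ z, exp (h z) ∂μ with hZh
  have hZgpos : 0 < Zg := integral_exp_pos (integrable_of_cont hWc hμW _ hg.rexp)
  have hZhpos : 0 < Zh := integral_exp_pos (integrable_of_cont hWc hμW _ hh.rexp)
  set p : E := Zh⁻¹ • ∫ z, exp (h z) • z ∂μ with hp
  have hpW : p ∈ W := tilt_mean_mem hWc hWconv hμW hh
  have int_gz : Integrable (fun z => exp (g z) • z) μ :=
    integrable_of_cont hWc hμW _ (hg.rexp.smul continuous_id)
  have int_hz : Integrable (fun z => exp (h z) • z) μ :=
    integrable_of_cont hWc hμW _ (hh.rexp.smul continuous_id)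
  have int_g : Integrable (fun z => exp (g z)) μ := integrable_of_cont hWc hμW _ hg.rexp
  have int_h : Integrable (fun z => exp (h z)) μ := integrable_of_cont hWc hμW _ hh.rexp
  have int_gp : Integrable (fun z => exp (g z) • (z - p)) μ :=
    integrable_of_cont hWc hμW _ (hg.rexp.smul (continuous_id.sub continuous_const))
  have int_hp : Integrable (fun z => exp (m + h z) • (z - p)) μ :=
    integrable_of_cont hWc hμW _
      ((continuous_const.add hh).rexp.smul (continuous_id.sub continuous_const))
  have int_diff : Integrable (fun z => (exp (g z) - exp (m + h z)) • (z - p)) μ := by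
    have : (fun z => (exp (g z) - exp (m + h z)) • (z - p))
        = fun z => exp (g z) • (z - p) - exp (m + h z) • (z - p) := by
      funext z; rw [sub_smul]
    rw [this]; exact int_gp.sub int_hp
  have h2 : ∫ z, exp (m + h z) • (z - p) ∂μ = 0 := by
    have e1 : (fun z => exp (m + h z) • (z - p)) = fun z => exp m • (exp (h z) • (z - p)) := by
      funext z; rw [exp_add, smul_smul]
    rw [e1, integral_smul]
    have e2 : ∫ z, exp (h z) • (z - p) ∂μ = (∫ z, exp (h z) • z ∂μ) - Zh • p := by
      have : (fun z => exp (h z) • (z - p)) = fun z => exp (h z) • z - exp (h z) • p := by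
        funext z; rw [smul_sub]
      rw [this, integral_sub int_hz (int_h.smul_const p), integral_smul_const]
    rw [e2, hp, smul_inv_smul₀ hZhpos.ne', sub_self, smul_zero]
  have hkey : Zg⁻¹ • ∫ z, exp (g z) • z ∂μ - p
      = Zg⁻¹ • ∫ z, (exp (g z) - exp (m + h z)) • (z - p) ∂μ := by
    have e3 : ∫ z, (exp (g z) - exp (m + h z)) • (z - p) ∂μ
        = (∫ z, exp (g z) • z ∂μ) - Zg • p := by
      have e4 : (fun z => (exp (g z) - exp (m + h z)) • (z - p))
          = fun z => exp (g z) • (z - p) - exp (m + h z) • (z - p) := by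
        funext z; rw [sub_smul]
      have e5 : (fun z => exp (g z) • (z - p)) = fun z => exp (g z) • z - exp (g z) • p := by
        funext z; rw [smul_sub]
      rw [e4, integral_sub int_gp int_hp, h2, sub_zero, e5,
        integral_sub int_gz (int_g.smul_const p), integral_smul_const]
    rw [e3, smul_sub, inv_smul_smul₀ hZgpos.ne']
  have hptwise : ∀ᵐ z ∂μ, ‖(exp (g z) - exp (m + h z)) • (z - p)‖ ≤ (δ * M) * exp (g z) := by
    filter_upwards [ae_mem_of_one hWc hμW] with z hz
    have hle : m ≤ g z - h z := hmin hz
    have hup : (g z - h z) - m ≤ δ := hosc z hz z₀ hz₀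
    have hnn : 0 ≤ exp (g z) - exp (m + h z) := by
      have := exp_le_exp.2 (by linarith : m + h z ≤ g z)
      linarith
    have hdb : exp (g z) - exp (m + h z) ≤ δ * exp (g z) := by
      have h1 : exp (m + h z) = exp (g z) * exp (m + h z - g z) := by
        rw [← exp_add]; ring_nf
      have h2 : (m + h z - g z) + 1 ≤ exp (m + h z - g z) := Real.add_one_le_exp _
      have h3 : (0:ℝ) < exp (g z) := exp_pos _
      nlinarith
    rw [norm_smul, Real.norm_eq_abs, abs_of_nonneg hnn]
    have hzp : ‖z - p‖ ≤ M := hMW z hz p hpW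
    have hM0 : 0 ≤ M := le_trans (norm_nonneg _) (hMW z₀ hz₀ z₀ hz₀)
    calc (exp (g z) - exp (m + h z)) * ‖z - p‖
        ≤ (δ * exp (g z)) * M := by
          apply mul_le_mul hdb hzp (norm_nonneg _)
          positivity
      _ = (δ * M) * exp (g z) := by ring
  have hnorm : ‖∫ z, (exp (g z) - exp (m + h z)) • (z - p) ∂μ‖ ≤ (δ * M) * Zg := by
    calc ‖∫ z, (exp (g z) - exp (m + h z)) • (z - p) ∂μ‖
        ≤ ∫ z, ‖(exp (g z) - exp (m + h z)) • (z - p)‖ ∂μ := norm_integral_le_integral_norm _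
      _ ≤ ∫ z, (δ * M) * exp (g z) ∂μ :=
          integral_mono_ae int_diff.norm (int_g.const_mul _) hptwise
      _ = (δ * M) * Zg := by rw [integral_const_mul]
  rw [hkey, norm_smul, Real.norm_eq_abs, abs_of_nonneg (inv_nonneg.2 hZgpos.le)]
  calc Zg⁻¹ * ‖∫ z, (exp (g z) - exp (m + h z)) • (z - p) ∂μ‖
      ≤ Zg⁻¹ * ((δ * M) * Zg) := by
        apply mul_le_mul_of_nonneg_left hnorm (inv_nonneg.2 hZgpos.le)
    _ = δ * M := by field_simp

end TiltAux

section CalcAux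
variable {n : ℕ} {V : Fin n → Type*} [∀ i, NormedAddCommGroup (V i)]
  [∀ i, NormedSpace ℝ (V i)]

lemma coordL_apply (i : Fin n) (z : V i) : coordL V i z = Pi.single i z := rfl

lemma update_eq (x : ∀ j, V j) (i : Fin n) (w : V i) :
    Function.update x i w = x + Pi.single i (w - x i) := by
  funext j
  by_cases h : j = i
  · subst h; simp
  · simp [Function.update_of_ne h, Pi.single_eq_of_ne h]

lemma mvt01 {φ φd : ℝ → ℝ} {C : ℝ}
    (hd : ∀ t ∈ Set.Icc (0:ℝ) 1, HasDerivAt φ (φd t) t)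
    (hC : ∀ t ∈ Set.Icc (0:ℝ) 1, ‖φd t‖ ≤ C) : |φ 1 - φ 0| ≤ C := by
  have := norm_image_sub_le_of_norm_deriv_le_segment'
    (fun t ht => (hd t ht).hasDerivWithinAt) (fun t ht => hC t (Set.Ico_subset_Icc_self ht))
    1 (Set.right_mem_Icc.2 zero_le_one)
  simpa using this

lemma hasFDerivAt_update' (x : ∀ j, V j) (i : Fin n) (w : V i) :
    HasFDerivAt (fun z : V i => Function.update x i z) (coordL V i) w := by
  have h0 : (fun z : V i => Function.update x i z)
      = fun z : V i => x + coordL V i (z - x i) := by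
    funext z; rw [update_eq]; rfl
  rw [h0]
  have h1 : HasFDerivAt (fun z : V i => coordL V i (z - x i))
      ((coordL V i).comp (ContinuousLinearMap.id ℝ (V i))) w :=
    ((coordL V i).hasFDerivAt).comp w ((hasFDerivAt_id w).sub_const (x i))
  simpa using h1.const_add x

lemma hasFDerivAt_f_update {f : (∀ j, V j) → ℝ} (hf1 : Differentiable ℝ f)
    (x : ∀ j, V j) (i : Fin n) (w : V i) :
    HasFDerivAt (fun z : V i => f (Function.update x i z))
      (partialD f (Function.update x i w) i) w :=
  ((hf1 _).hasFDerivAt).comp w (hasFDerivAt_update' x i w)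

variable {W : ∀ i, Set (V i)} {f : (∀ j, V j) → ℝ}

/-- Lipschitz bound for the `i`-th partial along the `i`-th coordinate. -/
lemma partial_lip (hWconv : ∀ i, Convex ℝ (W i))
    (hf2 : Differentiable ℝ (fderiv ℝ f))
    {c : Fin n → Fin n → ℝ} (hc_pos : ∀ i j, 0 < c i j)
    (hc : ∀ x ∈ Set.univ.pi W, ∀ (i j : Fin n) (zi : V i) (rj : V j),
      |fderiv ℝ (fun y => fderiv ℝ f y (Pi.single i zi)) x (Pi.single j rj)|
        ≤ c i j * ‖zi‖ * ‖rj‖)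
    {x : ∀ j, V j} (hx : x ∈ Set.univ.pi W) (i : Fin n) {yi : V i} (hyi : yi ∈ W i) :
    ‖partialD f (Function.update x i yi) i - partialD f x i‖ ≤ c i i * ‖yi - x i‖ := by
  have hcpos := hc_pos i i
  refine ContinuousLinearMap.opNorm_le_bound _ (by positivity) (fun v => ?_)
  set u : V i := yi - x i with hu
  set w : ∀ j, V j := Pi.single i u with hw
  set G : (∀ j, V j) → ℝ := fun y => fderiv ℝ f y (Pi.single i v) with hG
  have hGdiff : Differentiable ℝ G := fun y =>
    (ContinuousLinearMap.apply ℝ ℝ (Pi.single i v)).differentiableAt.comp y (hf2 y)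
  set φ : ℝ → ℝ := fun s => G (x + s • w) with hφ
  have hγ : ∀ s : ℝ, HasDerivAt (fun s : ℝ => x + s • w) w s := fun s => by
    simpa using ((hasDerivAt_id s).smul_const w).const_add x
  have hφd : ∀ s : ℝ, HasDerivAt φ (fderiv ℝ G (x + s • w) w) s := fun s =>
    ((hGdiff _).hasFDerivAt).comp_hasDerivAt s (hγ s)
  have hmem : ∀ s ∈ Set.Icc (0:ℝ) 1, (x + s • w) ∈ Set.univ.pi W := by
    intro s hs j _
    by_cases hji : j = i
    · subst hji
      have h1 : (x + s • w) j = x j + s • u := by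
        simp [hw, Pi.single_eq_same]
      have h2 : x j + s • u = (1 - s) • x j + s • yi := by
        rw [hu]; module
      rw [h1, h2]
      exact hWconv j (hx j trivial) hyi (by linarith [hs.2]) hs.1 (by ring)
    · have h1 : (x + s • w) j = x j := by
        simp [hw, Pi.single_eq_of_ne hji]
      rw [h1]; exact hx j trivial
  have hbound : ∀ s ∈ Set.Icc (0:ℝ) 1, ‖fderiv ℝ G (x + s • w) w‖ ≤ (c i i * ‖u‖) * ‖v‖ := by
    intro s hs
    have h := hc (x + s • w) (hmem s hs) i i v u
    rw [Real.norm_eq_abs]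
    calc |fderiv ℝ G (x + s • w) w| = |fderiv ℝ G (x + s • w) (Pi.single i u)| := by rw [hw]
      _ ≤ c i i * ‖v‖ * ‖u‖ := h
      _ = (c i i * ‖u‖) * ‖v‖ := by ring
  have hmvt := mvt01 (fun t _ => hφd t) hbound
  have hφ1 : φ 1 = partialD f (Function.update x i yi) i v := by
    have : x + (1:ℝ) • w = Function.update x i yi := by
      rw [one_smul, hw, hu, ← update_eq]
    simp only [hφ, hG, this]
    rfl
  have hφ0 : φ 0 = partialD f x i v := by
    have : x + (0:ℝ) • w = x := by rw [zero_smul, add_zero]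
    simp only [hφ, hG, this]
    rfl
  calc ‖(partialD f (Function.update x i yi) i - partialD f x i) v‖
      = |φ 1 - φ 0| := by rw [hφ1, hφ0]; rfl
    _ ≤ (c i i * ‖u‖) * ‖v‖ := hmvt
    _ = c i i * ‖yi - x i‖ * ‖v‖ := by rw [hu]

/-- One-sided oscillation bound for `z ↦ f(x^{(i)}_z) - d z` over `W i`. -/
lemma osc_bound (hWconv : ∀ i, Convex ℝ (W i))
    (hf1 : Differentiable ℝ f) (hf2 : Differentiable ℝ (fderiv ℝ f))
    {c : Fin n → Fin n → ℝ} (hc_pos : ∀ i j, 0 < c i j)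
    (hc : ∀ x ∈ Set.univ.pi W, ∀ (i j : Fin n) (zi : V i) (rj : V j),
      |fderiv ℝ (fun y => fderiv ℝ f y (Pi.single i zi)) x (Pi.single j rj)|
        ≤ c i j * ‖zi‖ * ‖rj‖)
    {M : ℝ} (hMW : ∀ i, ∀ z ∈ W i, ∀ z' ∈ W i, ‖z - z'‖ ≤ M)
    {x : ∀ j, V j} (hx : x ∈ Set.univ.pi W) (i : Fin n) (d : V i →L[ℝ] ℝ)
    {z z' : V i} (hz : z ∈ W i) (hz' : z' ∈ W i) :
    (f (Function.update x i z) - d z) - (f (Function.update x i z') - d z')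
      ≤ (‖partialD f x i - d‖ + c i i * M) * M := by
  set e : ℝ := ‖partialD f x i - d‖ with he
  have hM0 : 0 ≤ M := le_trans (norm_nonneg _) (hMW i z hz z hz)
  have hcpos := hc_pos i i
  set η : ℝ → V i := fun t => z' + t • (z - z') with hη
  have hηd : ∀ t : ℝ, HasDerivAt η (z - z') t := fun t => by
    simpa [hη] using ((hasDerivAt_id t).smul_const (z - z')).const_add z'
  set φ : ℝ → ℝ := fun t => f (Function.update x i (η t)) - d (η t) with hφ
  have hφd : ∀ t : ℝ,
      HasDerivAt φ ((partialD f (Function.update x i (η t)) i - d) (z - z')) t := by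
    intro t
    have h1 : HasDerivAt (fun s : ℝ => f (Function.update x i (η s)))
        (partialD f (Function.update x i (η t)) i (z - z')) t :=
      (hasFDerivAt_f_update hf1 x i (η t)).comp_hasDerivAt t (hηd t)
    have h2 : HasDerivAt (fun s : ℝ => d (η s)) (d (z - z')) t :=
      (d.hasFDerivAt).comp_hasDerivAt t (hηd t)
    exact h1.sub h2
  have hηW : ∀ t ∈ Set.Icc (0:ℝ) 1, η t ∈ W i := by
    intro t ht
    have h1 : η t = (1 - t) • z' + t • z := by rw [hη]; simp only []; module
    rw [h1]
    exact hWconv i hz' hz (by linarith [ht.2]) ht.1 (by ring)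
  have hbound : ∀ t ∈ Set.Icc (0:ℝ) 1,
      ‖(partialD f (Function.update x i (η t)) i - d) (z - z')‖ ≤ (e + c i i * M) * M := by
    intro t ht
    have hP : ‖partialD f (Function.update x i (η t)) i - d‖ ≤ e + c i i * M := by
      have hsplit : partialD f (Function.update x i (η t)) i - d
          = (partialD f (Function.update x i (η t)) i - partialD f x i)
            + (partialD f x i - d) := by abel
      calc ‖partialD f (Function.update x i (η t)) i - d‖
          ≤ ‖partialD f (Function.update x i (η t)) i - partialD f x i‖
            + ‖partialD f x i - d‖ := by rw [hsplit]; exact norm_add_le _ _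
        _ ≤ c i i * ‖η t - x i‖ + e :=
            add_le_add (partial_lip hWconv hf2 hc_pos hc hx i (hηW t ht)) le_rfl
        _ ≤ c i i * M + e := by
            have := hMW i (η t) (hηW t ht) (x i) (hx i trivial)
            nlinarith
        _ = e + c i i * M := by ring
    calc ‖(partialD f (Function.update x i (η t)) i - d) (z - z')‖
        ≤ ‖partialD f (Function.update x i (η t)) i - d‖ * ‖z - z'‖ :=
          ContinuousLinearMap.le_opNorm _ _
      _ ≤ (e + c i i * M) * M := by
          apply mul_le_mul hP (hMW i z hz z' hz') (norm_nonneg _)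
          positivity
  have hmvt := mvt01 (fun t _ => hφd t) hbound
  have hη1 : η 1 = z := by rw [hη]; simp
  have hη0 : η 0 = z' := by rw [hη]; simp
  have hφ1 : φ 1 = f (Function.update x i z) - d z := by rw [hφ]; simp only [hη1]
  have hφ0 : φ 0 = f (Function.update x i z') - d z' := by rw [hφ]; simp only [hη0]
  rw [hφ1, hφ0] at hmvt
  exact le_trans (le_abs_self _) hmvt

/-- Multivariate mean value bound with coordinatewise partials. -/
lemma f_diff_bound (hWconv : ∀ i, Convex ℝ (W i)) (hf1 : Differentiable ℝ f)
    {b : Fin n → ℝ}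
    (hb : ∀ x ∈ Set.univ.pi W, ∀ i, ‖partialD f x i‖ ≤ b i)
    {u v : ∀ j, V j} (hu : u ∈ Set.univ.pi W) (hv : v ∈ Set.univ.pi W) :
    |f u - f v| ≤ ∑ i, b i * ‖u i - v i‖ := by
  set φ : ℝ → ℝ := fun t => f (v + t • (u - v)) with hφ
  have hγ : ∀ t : ℝ, HasDerivAt (fun t : ℝ => v + t • (u - v)) (u - v) t := fun t => by
    simpa using ((hasDerivAt_id t).smul_const (u - v)).const_add v
  have hφd : ∀ t : ℝ, HasDerivAt φ (fderiv ℝ f (v + t • (u - v)) (u - v)) t := fun t =>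
    ((hf1 _).hasFDerivAt).comp_hasDerivAt t (hγ t)
  have hmem : ∀ t ∈ Set.Icc (0:ℝ) 1, v + t • (u - v) ∈ Set.univ.pi W := by
    intro t ht j _
    have h1 : (v + t • (u - v)) j = v j + t • (u j - v j) := by simp
    have h2 : v j + t • (u j - v j) = (1 - t) • v j + t • u j := by module
    rw [h1, h2]
    exact hWconv j (hv j trivial) (hu j trivial) (by linarith [ht.2]) ht.1 (by ring)
  have hbound : ∀ t ∈ Set.Icc (0:ℝ) 1,
      ‖fderiv ℝ f (v + t • (u - v)) (u - v)‖ ≤ ∑ i, b i * ‖u i - v i‖ := by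
    intro t ht
    set y := v + t • (u - v) with hy
    have hdecomp : fderiv ℝ f y (u - v) = ∑ i, partialD f y i (u i - v i) := by
      have h1 : (u - v) = ∑ i, Pi.single i ((u - v) i) := (Finset.univ_sum_single _).symm
      rw [h1, map_sum]
      refine Finset.sum_congr rfl (fun i _ => ?_)
      have : (u - v) i = u i - v i := rfl
      rw [this]
      rfl
    rw [Real.norm_eq_abs, hdecomp]
    calc |∑ i, partialD f y i (u i - v i)| ≤ ∑ i, |partialD f y i (u i - v i)| :=
        Finset.abs_sum_le_sum_abs _ _
      _ ≤ ∑ i, b i * ‖u i - v i‖ := by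
          refine Finset.sum_le_sum (fun i _ => ?_)
          have h1 : |partialD f y i (u i - v i)| ≤ ‖partialD f y i‖ * ‖u i - v i‖ := by
            rw [← Real.norm_eq_abs]; exact ContinuousLinearMap.le_opNorm _ _
          exact h1.trans (mul_le_mul_of_nonneg_right (hb y (hmem t ht) i) (norm_nonneg _))
  have hmvt := mvt01 (fun t _ => hφd t) hbound
  have hφ1 : φ 1 = f u := by rw [hφ]; simp
  have hφ0 : φ 0 = f v := by rw [hφ]; simp
  rw [hφ1, hφ0] at hmvt
  exact hmvt

end CalcAux

lemma cauchy_sum {n : ℕ} (f g : Fin n → ℝ) :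
    ∑ i, f i * g i ≤ Real.sqrt (∑ i, f i ^ 2) * Real.sqrt (∑ i, g i ^ 2) := by
  have h := Finset.sum_mul_sq_le_sq_mul_sq Finset.univ f g
  calc ∑ i, f i * g i ≤ |∑ i, f i * g i| := le_abs_self _
    _ = Real.sqrt ((∑ i, f i * g i) ^ 2) := (Real.sqrt_sq_eq_abs _).symm
    _ ≤ Real.sqrt ((∑ i, f i ^ 2) * (∑ i, g i ^ 2)) := Real.sqrt_le_sqrt h
    _ = _ := Real.sqrt_mul (Finset.sum_nonneg fun i _ => sq_nonneg _) _

/-- **Smoothness-complexity error bound (`Δ₂ ≤ B₂`).** For `x ∈ W`, functionals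
`d = (d₁,…,dₙ)` with `∑ ‖f_i(x) - d i‖² ≤ ε² n` and tilted means `p i`,
`|f(x̂) - f(p)| + |∑ d i (x̂ᵢ - pᵢ)| + |∑ (d i - f_i(x^{(i)}_{θᵢ}))(x̂ᵢ - xᵢ)| ≤ B₂`. -/
theorem delta_two_le_B_two
    {n : ℕ} {V : Fin n → Type*}
    [∀ i, NormedAddCommGroup (V i)] [∀ i, NormedSpace ℝ (V i)]
    [∀ i, CompleteSpace (V i)] [∀ i, MeasurableSpace (V i)] [∀ i, BorelSpace (V i)]
    (μ : ∀ i, Measure (V i)) [∀ i, IsProbabilityMeasure (μ i)]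
    (W : ∀ i, Set (V i))
    (hWc : ∀ i, IsCompact (W i)) (hWconv : ∀ i, Convex ℝ (W i))
    (hμW : ∀ i, μ i (W i) = 1)
    (f : (∀ j, V j) → ℝ)
    (hf1 : Differentiable ℝ f) (hf2 : Differentiable ℝ (fderiv ℝ f))
    (b : Fin n → ℝ) (hb_pos : ∀ i, 0 < b i)
    (hb : ∀ x ∈ Set.univ.pi W, ∀ i, ‖partialD f x i‖ ≤ b i)
    (c : Fin n → Fin n → ℝ) (hc_pos : ∀ i j, 0 < c i j)
    (hc : ∀ x ∈ Set.univ.pi W, ∀ (i j : Fin n) (zi : V i) (rj : V j),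
      |fderiv ℝ (fun y => fderiv ℝ f y (Pi.single i zi)) x (Pi.single j rj)|
        ≤ c i j * ‖zi‖ * ‖rj‖)
    (M : ℝ) (hM : 0 < M)
    (hMW : ∀ i, ∀ z ∈ W i, ∀ z' ∈ W i, ‖z - z'‖ ≤ M)
    (θ : ∀ j, V j) (hθ : θ ∈ Set.univ.pi W)
    (ε : ℝ) (hε : 0 < ε)
    (x : ∀ j, V j) (hx : x ∈ Set.univ.pi W)
    (d : ∀ i, V i →L[ℝ] ℝ)
    (hd : ∑ i, ‖partialD f x i - d i‖ ^ 2 ≤ ε ^ 2 * n) :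
    |f (fun i => tiltedCondMean μ f x i) - f (fun i => tiltMean (μ i) (d i))|
      + |∑ i, d i (tiltedCondMean μ f x i - tiltMean (μ i) (d i))|
      + |∑ i, (d i - partialD f (Function.update x i (θ i)) i)
          (tiltedCondMean μ f x i - x i)| ≤
      4 * Real.sqrt (∑ i, b i ^ 2 + ε ^ 2 * n)
          * (M ^ 3 * Real.sqrt (∑ i, c i i ^ 2) + M ^ 2 * Real.sqrt n * ε)
        + ∑ i, M ^ 2 * c i i + M * n * ε := by
  classical
  have hM0 : (0:ℝ) ≤ M := hM.le
  have hxW : ∀ i, x i ∈ W i := fun i => hx i trivial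
  set e : Fin n → ℝ := fun i => ‖partialD f x i - d i‖ with he
  have he0 : ∀ i, 0 ≤ e i := fun i => norm_nonneg _
  -- continuity of the conditional slice
  have hcont : ∀ i, Continuous (fun z : V i => f (Function.update x i z)) := by
    intro i
    have h0 : (fun z : V i => Function.update x i z)
        = fun z : V i => x + coordL V i (z - x i) := by
      funext z; rw [update_eq]; rfl
    have hcu : Continuous (fun z : V i => Function.update x i z) := by
      rw [h0]
      exact continuous_const.add ((coordL V i).continuous.comp
        (continuous_id.sub continuous_const))
    exact hf1.continuous.comp hcu
  -- memberships of tilted means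
  have hxhatW : ∀ i, tiltedCondMean μ f x i ∈ W i := fun i =>
    tilt_mean_mem (hWc i) (hWconv i) (hμW i) (hcont i)
  have hpWmem : ∀ i, tiltMean (μ i) (d i) ∈ W i := fun i =>
    tilt_mean_mem (hWc i) (hWconv i) (hμW i) (d i).continuous
  -- coordinatewise tilted-mean perturbation bound
  have hdiffc : ∀ i, ‖tiltedCondMean μ f x i - tiltMean (μ i) (d i)‖
      ≤ ((e i + c i i * M) * M) * M := by
    intro i
    have hδ : (0:ℝ) ≤ (e i + c i i * M) * M :=
      mul_nonneg (add_nonneg (he0 i) (mul_nonneg (hc_pos i i).le hM0)) hM0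
    exact tilt_mean_diff (hWc i) (hWconv i) (hμW i) (hcont i) (d i).continuous hδ (hMW i)
      (fun z hz z' hz' => osc_bound hWconv hf1 hf2 hc_pos hc hMW hx i (d i) hz hz')
  -- Term 3
  have hdθ : ∀ i, ‖d i - partialD f (Function.update x i (θ i)) i‖ ≤ e i + c i i * M := by
    intro i
    have hsplit : d i - partialD f (Function.update x i (θ i)) i
        = -(partialD f x i - d i)
          + -(partialD f (Function.update x i (θ i)) i - partialD f x i) := by abel
    calc ‖d i - partialD f (Function.update x i (θ i)) i‖
        ≤ ‖-(partialD f x i - d i)‖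
          + ‖-(partialD f (Function.update x i (θ i)) i - partialD f x i)‖ := by
          rw [hsplit]; exact norm_add_le _ _
      _ = e i + ‖partialD f (Function.update x i (θ i)) i - partialD f x i‖ := by
          rw [norm_neg, norm_neg]
      _ ≤ e i + c i i * ‖θ i - x i‖ :=
          add_le_add le_rfl (partial_lip hWconv hf2 hc_pos hc hx i (hθ i trivial))
      _ ≤ e i + c i i * M := add_le_add le_rfl
          (mul_le_mul_of_nonneg_left (hMW i (θ i) (hθ i trivial) (x i) (hxW i))
            (hc_pos i i).le)
  have hterm3 : |∑ i, (d i - partialD f (Function.update x i (θ i)) i)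
        (tiltedCondMean μ f x i - x i)| ≤ ∑ i, (e i + c i i * M) * M := by
    calc |∑ i, (d i - partialD f (Function.update x i (θ i)) i)
          (tiltedCondMean μ f x i - x i)|
        ≤ ∑ i, |(d i - partialD f (Function.update x i (θ i)) i)
            (tiltedCondMean μ f x i - x i)| := Finset.abs_sum_le_sum_abs _ _
      _ ≤ ∑ i, (e i + c i i * M) * M := by
          refine Finset.sum_le_sum (fun i _ => ?_)
          have h1 : |(d i - partialD f (Function.update x i (θ i)) i)
              (tiltedCondMean μ f x i - x i)|
              ≤ ‖d i - partialD f (Function.update x i (θ i)) i‖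
                * ‖tiltedCondMean μ f x i - x i‖ := by
            rw [← Real.norm_eq_abs]; exact ContinuousLinearMap.le_opNorm _ _
          refine h1.trans ?_
          have h2 : ‖tiltedCondMean μ f x i - x i‖ ≤ M := hMW i _ (hxhatW i) _ (hxW i)
          exact mul_le_mul (hdθ i) h2 (norm_nonneg _)
            (add_nonneg (he0 i) (mul_nonneg (hc_pos i i).le hM0))
  -- Term 1
  have hterm1 : |f (fun i => tiltedCondMean μ f x i) - f (fun i => tiltMean (μ i) (d i))|
      ≤ ∑ i, b i * (((e i + c i i * M) * M) * M) := by
    have h := f_diff_bound hWconv hf1 hb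
      (fun i _ => hxhatW i) (fun i _ => hpWmem i)
    refine h.trans (Finset.sum_le_sum fun i _ => ?_)
    exact mul_le_mul_of_nonneg_left (hdiffc i) (hb_pos i).le
  -- Term 2
  have hdn : ∀ i, ‖d i‖ ≤ b i + e i := by
    intro i
    calc ‖d i‖ = ‖partialD f x i - (partialD f x i - d i)‖ := by rw [sub_sub_cancel]
      _ ≤ ‖partialD f x i‖ + ‖partialD f x i - d i‖ := norm_sub_le _ _
      _ ≤ b i + e i := add_le_add (hb x hx i) le_rfl
  have hterm2 : |∑ i, d i (tiltedCondMean μ f x i - tiltMean (μ i) (d i))|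
      ≤ ∑ i, (b i + e i) * (((e i + c i i * M) * M) * M) := by
    calc |∑ i, d i (tiltedCondMean μ f x i - tiltMean (μ i) (d i))|
        ≤ ∑ i, |d i (tiltedCondMean μ f x i - tiltMean (μ i) (d i))| :=
          Finset.abs_sum_le_sum_abs _ _
      _ ≤ ∑ i, (b i + e i) * (((e i + c i i * M) * M) * M) := by
          refine Finset.sum_le_sum (fun i _ => ?_)
          have h1 : |d i (tiltedCondMean μ f x i - tiltMean (μ i) (d i))|
              ≤ ‖d i‖ * ‖tiltedCondMean μ f x i - tiltMean (μ i) (d i)‖ := by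
            rw [← Real.norm_eq_abs]; exact ContinuousLinearMap.le_opNorm _ _
          refine h1.trans ?_
          exact mul_le_mul (hdn i) (hdiffc i) (norm_nonneg _)
            (by have := he0 i; have := (hb_pos i).le; linarith)
  -- numeric endgame
  set t : ℝ := Real.sqrt (∑ i, e i ^ 2) with ht
  set Sb : ℝ := Real.sqrt (∑ i, b i ^ 2) with hSb
  set Sc : ℝ := Real.sqrt (∑ i, c i i ^ 2) with hSc
  set B : ℝ := Real.sqrt (∑ i, b i ^ 2 + ε ^ 2 * n) with hB
  have ht0 : 0 ≤ t := Real.sqrt_nonneg _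
  have hSb0 : 0 ≤ Sb := Real.sqrt_nonneg _
  have hSc0 : 0 ≤ Sc := Real.sqrt_nonneg _
  have hB0 : 0 ≤ B := Real.sqrt_nonneg _
  have hsqn : Real.sqrt n * Real.sqrt n = (n:ℝ) :=
    Real.mul_self_sqrt (Nat.cast_nonneg n)
  have hsqn0 : (0:ℝ) ≤ Real.sqrt n := Real.sqrt_nonneg _
  -- t ≤ ε √n
  have htεn : t ≤ ε * Real.sqrt n := by
    have h1 : t ≤ Real.sqrt (ε ^ 2 * n) := Real.sqrt_le_sqrt hd
    have h2 : Real.sqrt (ε ^ 2 * n) = ε * Real.sqrt n := by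
      rw [Real.sqrt_mul (sq_nonneg ε), Real.sqrt_sq hε.le]
    rw [← h2]; exact h1
  have hεnB : ε * Real.sqrt n ≤ B := by
    have h1 : ε ^ 2 * n ≤ ∑ i, b i ^ 2 + ε ^ 2 * n := by
      have : 0 ≤ ∑ i, b i ^ 2 := Finset.sum_nonneg fun i _ => sq_nonneg _
      linarith
    have h2 : Real.sqrt (ε ^ 2 * n) = ε * Real.sqrt n := by
      rw [Real.sqrt_mul (sq_nonneg ε), Real.sqrt_sq hε.le]
    rw [← h2]; exact Real.sqrt_le_sqrt h1
  have htB : t ≤ B := htεn.trans hεnB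
  have hSbB : Sb ≤ B := by
    apply Real.sqrt_le_sqrt
    have : 0 ≤ ε ^ 2 * n := by positivity
    linarith
  -- Cauchy-Schwarz bounds
  have hbe : ∑ i, b i * e i ≤ Sb * t := cauchy_sum b e
  have hee : ∑ i, e i * e i ≤ t * t := by
    have h1 : ∑ i, e i * e i = ∑ i, e i ^ 2 := by
      refine Finset.sum_congr rfl (fun i _ => ?_); ring
    have h2 : ∑ i, e i ^ 2 = t * t := by
      rw [ht, Real.mul_self_sqrt (Finset.sum_nonneg fun i _ => sq_nonneg _)]
    rw [h1, h2]
  have hbc : ∑ i, b i * c i i ≤ Sb * Sc := cauchy_sum b (fun i => c i i)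
  have hec : ∑ i, e i * c i i ≤ t * Sc := cauchy_sum e (fun i => c i i)
  have hsume : ∑ i, e i ≤ ε * n := by
    have h1 : ∑ i, e i * 1 ≤ t * Real.sqrt (∑ i, (1:ℝ) ^ 2) := cauchy_sum e 1
    have h2 : ∑ _i : Fin n, ((1:ℝ)) ^ 2 = (n:ℝ) := by simp
    have h3 : ∑ i, e i * 1 = ∑ i, e i := by simp
    rw [h2, h3] at h1
    calc ∑ i, e i ≤ t * Real.sqrt n := h1
      _ ≤ (ε * Real.sqrt n) * Real.sqrt n := by
          exact mul_le_mul_of_nonneg_right htεn hsqn0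
      _ = ε * n := by rw [mul_assoc, hsqn]
  -- assemble term 3 bound
  have hterm3' : |∑ i, (d i - partialD f (Function.update x i (θ i)) i)
        (tiltedCondMean μ f x i - x i)| ≤ ∑ i, M ^ 2 * c i i + M * n * ε := by
    refine hterm3.trans ?_
    have hexp : ∑ i, (e i + c i i * M) * M = M * (∑ i, e i) + ∑ i, M ^ 2 * c i i := by
      rw [Finset.mul_sum]
      rw [← Finset.sum_add_distrib]
      refine Finset.sum_congr rfl (fun i _ => ?_); ring
    rw [hexp]
    have : M * (∑ i, e i) ≤ M * (ε * n) := mul_le_mul_of_nonneg_left hsume hM0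
    have hfin : M * (ε * n) = M * n * ε := by ring
    linarith [this, hfin]
  -- assemble terms 1+2 bound
  have h12 : |f (fun i => tiltedCondMean μ f x i) - f (fun i => tiltMean (μ i) (d i))|
      + |∑ i, d i (tiltedCondMean μ f x i - tiltMean (μ i) (d i))|
      ≤ M ^ 2 * 2 * (∑ i, b i * e i) + M ^ 2 * (∑ i, e i * e i)
        + (M ^ 3 * 2 * (∑ i, b i * c i i) + M ^ 3 * (∑ i, e i * c i i)) := by
    have hsum : ∑ i, b i * (((e i + c i i * M) * M) * M)
        + ∑ i, (b i + e i) * (((e i + c i i * M) * M) * M)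
        = M ^ 2 * 2 * (∑ i, b i * e i) + M ^ 2 * (∑ i, e i * e i)
          + (M ^ 3 * 2 * (∑ i, b i * c i i) + M ^ 3 * (∑ i, e i * c i i)) := by
      rw [Finset.mul_sum, Finset.mul_sum, Finset.mul_sum, Finset.mul_sum,
        ← Finset.sum_add_distrib, ← Finset.sum_add_distrib, ← Finset.sum_add_distrib,
        ← Finset.sum_add_distrib]
      refine Finset.sum_congr rfl (fun i _ => ?_); ring
    linarith [hterm1, hterm2, le_of_eq hsum]
  -- final combination
  have hmain : M ^ 2 * 2 * (∑ i, b i * e i) + M ^ 2 * (∑ i, e i * e i)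
      + (M ^ 3 * 2 * (∑ i, b i * c i i) + M ^ 3 * (∑ i, e i * c i i))
      ≤ 4 * B * (M ^ 3 * Sc + M ^ 2 * Real.sqrt n * ε) := by
    have hM2 : (0:ℝ) ≤ M ^ 2 := sq_nonneg M
    have hM3 : (0:ℝ) ≤ M ^ 3 := by positivity
    have s1 : M ^ 2 * 2 * (∑ i, b i * e i) ≤ M ^ 2 * 2 * (B * (ε * Real.sqrt n)) := by
      apply mul_le_mul_of_nonneg_left _ (by positivity)
      calc ∑ i, b i * e i ≤ Sb * t := hbe
        _ ≤ B * (ε * Real.sqrt n) := mul_le_mul hSbB htεn ht0 hB0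
    have s2 : M ^ 2 * (∑ i, e i * e i) ≤ M ^ 2 * (B * (ε * Real.sqrt n)) := by
      apply mul_le_mul_of_nonneg_left _ hM2
      calc ∑ i, e i * e i ≤ t * t := hee
        _ ≤ B * (ε * Real.sqrt n) := mul_le_mul htB htεn ht0 hB0
    have s3 : M ^ 3 * 2 * (∑ i, b i * c i i) ≤ M ^ 3 * 2 * (B * Sc) := by
      apply mul_le_mul_of_nonneg_left _ (by positivity)
      calc ∑ i, b i * c i i ≤ Sb * Sc := hbc
        _ ≤ B * Sc := mul_le_mul_of_nonneg_right hSbB hSc0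
    have s4 : M ^ 3 * (∑ i, e i * c i i) ≤ M ^ 3 * (B * Sc) := by
      apply mul_le_mul_of_nonneg_left _ hM3
      calc ∑ i, e i * c i i ≤ t * Sc := hec
        _ ≤ B * Sc := mul_le_mul_of_nonneg_right htB hSc0
    have hrest : 0 ≤ B * (M ^ 3 * Sc + M ^ 2 * Real.sqrt n * ε) := by positivity
    have hkey : 4 * B * (M ^ 3 * Sc + M ^ 2 * Real.sqrt n * ε)
        = M ^ 2 * 2 * (B * (ε * Real.sqrt n)) + M ^ 2 * (B * (ε * Real.sqrt n))
          + (M ^ 3 * 2 * (B * Sc) + M ^ 3 * (B * Sc))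
          + B * (M ^ 3 * Sc + M ^ 2 * Real.sqrt n * ε) := by ring
    linarith [s1, s2, s3, s4, hrest, hkey]
  linarith [h12, hterm3', hmain]
end

section
/- Triangle count lower bound via degrees: Let G be a simple graph on N vertices with edge set A and degrees deg(i). Then the number of triangles in G is at least (1/3)( Σ_{i=1}^N deg(i)² − |A|(N+1) ), and consequently at least (1/3)( 4|A|²/N − |A|(N+1) ). -/
open Finset

section Aux


lemma six_triangles {N : ℕ} (G : SimpleGraph (Fin N)) [DecidableRel G.Adj] :
    (univ.filter fun p : Fin N × Fin N × Fin N =>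
        G.Adj p.1 p.2.1 ∧ G.Adj p.1 p.2.2 ∧ G.Adj p.2.1 p.2.2).card
      = 6 * (G.cliqueFinset 3).card := by
  rw [Finset.card_eq_sum_card_fiberwise
    (f := fun p : Fin N × Fin N × Fin N => ({p.1, p.2.1, p.2.2} : Finset (Fin N)))
    (t := G.cliqueFinset 3) (by
      rintro ⟨a, b, c⟩ hp
      simp only [mem_coe, mem_filter] at hp
      exact SimpleGraph.mem_cliqueFinset_iff.2 (SimpleGraph.is3Clique_triple_iff.2 hp.2))]
  rw [Finset.sum_congr rfl (fun t ht => ?_), Finset.sum_const, smul_eq_mul, mul_comm]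
  obtain ⟨a, b, c, hab, hac, hbc, rfl⟩ :=
    SimpleGraph.is3Clique_iff.1 (SimpleGraph.mem_cliqueFinset_iff.1 ht)
  have hab' := hab.ne
  have hac' := hac.ne
  have hbc' := hbc.ne
  have : (univ.filter fun p : Fin N × Fin N × Fin N =>
        G.Adj p.1 p.2.1 ∧ G.Adj p.1 p.2.2 ∧ G.Adj p.2.1 p.2.2).filter
        (fun p => ({p.1, p.2.1, p.2.2} : Finset (Fin N)) = {a, b, c})
      = {(a,b,c),(a,c,b),(b,a,c),(b,c,a),(c,a,b),(c,b,a)} := by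
    ext ⟨x, y, z⟩
    simp only [mem_filter, mem_univ, true_and, mem_insert, mem_singleton, Prod.mk.injEq]
    constructor
    · rintro ⟨⟨hxy, hxz, hyz⟩, hset⟩
      have hx : x ∈ ({a, b, c} : Finset (Fin N)) := by rw [← hset]; simp
      have hy : y ∈ ({a, b, c} : Finset (Fin N)) := by rw [← hset]; simp
      have hz : z ∈ ({a, b, c} : Finset (Fin N)) := by rw [← hset]; simp
      simp only [mem_insert, mem_singleton] at hx hy hz
      have hxy' := hxy.ne
      have hxz' := hxz.ne
      have hyz' := hyz.ne
      rcases hx with rfl | rfl | rfl <;> rcases hy with rfl | rfl | rfl <;>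
        rcases hz with rfl | rfl | rfl <;> simp_all
    · have hset : ∀ x y z : Fin N, ({x, y, z} : Finset (Fin N)) = {a, b, c} ↔
          (∀ w, (w = x ∨ w = y ∨ w = z) ↔ (w = a ∨ w = b ∨ w = c)) := by
        intro x y z
        constructor
        · intro h w; constructor <;> intro hw <;>
            [ (have : w ∈ ({a,b,c} : Finset (Fin N)) := h ▸ (by simp [hw]));
              (have : w ∈ ({x,y,z} : Finset (Fin N)) := h.symm ▸ (by simp [hw]))] <;>
            simpa using this
        · intro h; ext w; simp [h w]
      rintro (⟨rfl, rfl, rfl⟩ | ⟨rfl, rfl, rfl⟩ | ⟨rfl, rfl, rfl⟩ | ⟨rfl, rfl, rfl⟩ |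
        ⟨rfl, rfl, rfl⟩ | ⟨rfl, rfl, rfl⟩)
      · exact ⟨⟨hab, hac, hbc⟩, rfl⟩
      · exact ⟨⟨hac, hab, hbc.symm⟩, (hset _ _ _).2 (fun w => by tauto)⟩
      · exact ⟨⟨hab.symm, hbc, hac⟩, (hset _ _ _).2 (fun w => by tauto)⟩
      · exact ⟨⟨hbc, hab.symm, hac.symm⟩, (hset _ _ _).2 (fun w => by tauto)⟩
      · exact ⟨⟨hac.symm, hbc.symm, hab⟩, (hset _ _ _).2 (fun w => by tauto)⟩
      · exact ⟨⟨hbc.symm, hac.symm, hab.symm⟩, (hset _ _ _).2 (fun w => by tauto)⟩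
  rw [this]
  rw [card_insert_of_notMem (by simp [Prod.ext_iff]; tauto),
      card_insert_of_notMem (by simp [Prod.ext_iff]; tauto),
      card_insert_of_notMem (by simp [Prod.ext_iff]; tauto),
      card_insert_of_notMem (by simp [Prod.ext_iff]; tauto),
      card_insert_of_notMem (by simp [Prod.ext_iff]; tauto),
      card_singleton]

lemma six_ge_aux {N : ℕ} (G : SimpleGraph (Fin N)) [DecidableRel G.Adj]
    (h6 : ((univ.filter fun p : Fin N × Fin N × Fin N =>
        G.Adj p.1 p.2.1 ∧ G.Adj p.1 p.2.2 ∧ G.Adj p.2.1 p.2.2).card : ℝ)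
      = 6 * (G.cliqueFinset 3).card) :
    6 * ((G.cliqueFinset 3).card : ℝ) ≥
      2 * ∑ i : Fin N, (G.degree i : ℝ) ^ 2 - 2 * N * G.edgeFinset.card := by
  have hdeg : ∀ a : Fin N, (G.degree a : ℝ) = ∑ b : Fin N, if G.Adj a b then (1:ℝ) else 0 := by
    intro a
    rw [← SimpleGraph.card_neighborFinset_eq_degree, SimpleGraph.neighborFinset_eq_filter,
      card_filter]
    push_cast
    rfl
  have hS : ((univ.filter fun p : Fin N × Fin N × Fin N =>
        G.Adj p.1 p.2.1 ∧ G.Adj p.1 p.2.2 ∧ G.Adj p.2.1 p.2.2).card : ℝ)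
      = ∑ a : Fin N, ∑ b : Fin N, ∑ c : Fin N,
          if G.Adj a b ∧ G.Adj a c ∧ G.Adj b c then (1:ℝ) else 0 := by
    rw [card_filter]
    push_cast
    rw [Fintype.sum_prod_type]
    congr 1; ext a
    rw [Fintype.sum_prod_type]
  -- inner bound
  have hinner : ∀ a b : Fin N, G.Adj a b →
      (∑ c : Fin N, if G.Adj a b ∧ G.Adj a c ∧ G.Adj b c then (1:ℝ) else 0)
        ≥ (G.degree a : ℝ) + (G.degree b : ℝ) - N := by
    intro a b hab
    have h1 : (∑ c : Fin N, if G.Adj a b ∧ G.Adj a c ∧ G.Adj b c then (1:ℝ) else 0)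
        = ((G.neighborFinset a ∩ G.neighborFinset b).card : ℝ) := by
      have heq : G.neighborFinset a ∩ G.neighborFinset b
          = univ.filter fun c => G.Adj a b ∧ G.Adj a c ∧ G.Adj b c := by
        ext c; simp [hab]
      rw [heq, card_filter]
      push_cast
      rfl
    have h2 := Finset.card_inter_add_card_union (G.neighborFinset a) (G.neighborFinset b)
    have h3 : ((G.neighborFinset a ∪ G.neighborFinset b).card) ≤ N := by
      simpa using Finset.card_le_univ (G.neighborFinset a ∪ G.neighborFinset b)
    rw [h1]
    have := (Nat.cast_le (α := ℝ)).2 h3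
    have h2' : ((G.neighborFinset a ∩ G.neighborFinset b).card : ℝ)
        + ((G.neighborFinset a ∪ G.neighborFinset b).card : ℝ)
        = (G.degree a : ℝ) + (G.degree b : ℝ) := by
      rw [← SimpleGraph.card_neighborFinset_eq_degree, ← SimpleGraph.card_neighborFinset_eq_degree]
      exact_mod_cast h2
    linarith
  have hsum : (∑ a : Fin N, ∑ b : Fin N, ∑ c : Fin N,
        if G.Adj a b ∧ G.Adj a c ∧ G.Adj b c then (1:ℝ) else 0)
      ≥ ∑ a : Fin N, ∑ b : Fin N,
        if G.Adj a b then (G.degree a : ℝ) + (G.degree b : ℝ) - N else 0 := by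
    refine Finset.sum_le_sum fun a _ => Finset.sum_le_sum fun b _ => ?_
    by_cases hab : G.Adj a b
    · simpa [hab] using hinner a b hab
    · simp [hab]
  have hsplit : (∑ a : Fin N, ∑ b : Fin N,
        if G.Adj a b then (G.degree a : ℝ) + (G.degree b : ℝ) - N else 0)
      = 2 * ∑ i : Fin N, (G.degree i : ℝ) ^ 2 - 2 * N * G.edgeFinset.card := by
    have key : ∀ a b : Fin N, (if G.Adj a b then (G.degree a : ℝ) + (G.degree b : ℝ) - N else 0)
        = (G.degree a : ℝ) * (if G.Adj a b then (1:ℝ) else 0)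
          + (G.degree b : ℝ) * (if G.Adj a b then (1:ℝ) else 0)
          - (N : ℝ) * (if G.Adj a b then (1:ℝ) else 0) := by
      intro a b; by_cases hab : G.Adj a b <;> simp [hab]
    simp_rw [key, Finset.sum_sub_distrib, Finset.sum_add_distrib, ← Finset.mul_sum, ← hdeg]
    have hcomm : (∑ a : Fin N, ∑ b : Fin N, (G.degree b : ℝ) * (if G.Adj a b then (1:ℝ) else 0))
        = ∑ b : Fin N, (G.degree b : ℝ) ^ 2 := by
      rw [Finset.sum_comm]
      refine Finset.sum_congr rfl fun b _ => ?_
      rw [← Finset.mul_sum]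
      have : (∑ a : Fin N, if G.Adj a b then (1:ℝ) else 0) = (G.degree b : ℝ) := by
        rw [hdeg b]
        exact Finset.sum_congr rfl fun a _ => if_congr (G.adj_comm a b) rfl rfl
      rw [this]; ring
    rw [hcomm]
    have hE : (∑ a : Fin N, (G.degree a : ℝ)) = 2 * G.edgeFinset.card := by
      exact_mod_cast G.sum_degrees_eq_twice_card_edges
    have : (∑ a : Fin N, (G.degree a : ℝ) * (G.degree a : ℝ))
        = ∑ i : Fin N, (G.degree i : ℝ) ^ 2 := by
      refine Finset.sum_congr rfl fun a _ => by ring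
    rw [this, hE]
    ring
  rw [← h6, hS]
  linarith [hsum, hsplit.ge, hsplit.le]

end Aux

/-- **Triangle count lower bound via degrees.** For a simple graph `G` on `N` vertices
with `|A|` edges, the number of triangles of `G` is at least
`(1/3)(∑ deg(i)² - |A|(N+1))`, and consequently at least
`(1/3)(4|A|²/N - |A|(N+1))`. -/
theorem triangle_count_lower_bound {N : ℕ} (G : SimpleGraph (Fin N))
    [DecidableRel G.Adj] :
    ((G.cliqueFinset 3).card : ℝ) ≥
        (1 / 3) * (∑ i : Fin N, (G.degree i : ℝ) ^ 2
          - (G.edgeFinset.card : ℝ) * ((N : ℝ) + 1)) ∧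
      ((G.cliqueFinset 3).card : ℝ) ≥
        (1 / 3) * (4 * (G.edgeFinset.card : ℝ) ^ 2 / (N : ℝ)
          - (G.edgeFinset.card : ℝ) * ((N : ℝ) + 1)) := by
  have h6 := six_ge_aux G (by exact_mod_cast six_triangles G)
  have hE0 : (0 : ℝ) ≤ (G.edgeFinset.card : ℝ) := Nat.cast_nonneg _
  have first : ((G.cliqueFinset 3).card : ℝ) ≥
      (1 / 3) * (∑ i : Fin N, (G.degree i : ℝ) ^ 2
        - (G.edgeFinset.card : ℝ) * ((N : ℝ) + 1)) := by
    nlinarith [h6, hE0]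
  refine ⟨first, ?_⟩
  rcases Nat.eq_zero_or_pos N with hN | hN
  · subst hN
    have hT : (0 : ℝ) ≤ ((G.cliqueFinset 3).card : ℝ) := Nat.cast_nonneg _
    simp only [Nat.cast_zero, div_zero]
    nlinarith
  · have hNpos : (0 : ℝ) < (N : ℝ) := by exact_mod_cast hN
    have hCS : (∑ i : Fin N, (G.degree i : ℝ)) ^ 2
        ≤ (N : ℝ) * ∑ i : Fin N, (G.degree i : ℝ) ^ 2 := by
      have := sq_sum_le_card_mul_sum_sq (s := (univ : Finset (Fin N)))
        (f := fun i => (G.degree i : ℝ))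
      simpa using this
    have hsum : (∑ i : Fin N, (G.degree i : ℝ)) = 2 * (G.edgeFinset.card : ℝ) := by
      exact_mod_cast G.sum_degrees_eq_twice_card_edges
    rw [hsum] at hCS
    have hdiv : 4 * (G.edgeFinset.card : ℝ) ^ 2 / (N : ℝ)
        ≤ ∑ i : Fin N, (G.degree i : ℝ) ^ 2 := by
      rw [div_le_iff₀ hNpos]
      nlinarith
    calc ((G.cliqueFinset 3).card : ℝ)
        ≥ (1 / 3) * (∑ i : Fin N, (G.degree i : ℝ) ^ 2
            - (G.edgeFinset.card : ℝ) * ((N : ℝ) + 1)) := first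
      _ ≥ (1 / 3) * (4 * (G.edgeFinset.card : ℝ) ^ 2 / (N : ℝ)
            - (G.edgeFinset.card : ℝ) * ((N : ℝ) + 1)) := by
          apply mul_le_mul_of_nonneg_left _ (by norm_num)
          linarith
end
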